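/- arXiv:0805.2322 — 7 statements merged into one kernel-verified Lean document; each statement's English description precedes it below -/
import Mathlib

section
/- Let U_1, ..., U_n be i.i.d. uniform random variables on (0,1) with order statistics U_{1:n} ≤ ... ≤ U_{n:n}. Then for any α ∈ (0,1], P(U_{i:n} ≥ iα/n for all i = 1, ..., n) = 1 − α. -/
open MeasureTheory ProbabilityTheory Finset Set
open scoped ENNReal

/-- number of coordinates strictly below `t` -/
noncomputable def cnt {m : ℕ} (x : Fin m → ℝ) (t : ℝ) : ℕ :=
  (Finset.univ.filter (fun j => x j < t)).card

lemma cnt_eq_sum {m : ℕ} (x : Fin m → ℝ) (t : ℝ) :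
    cnt x t = ∑ j : Fin m, if x j < t then 1 else 0 := by
  classical
  rw [cnt, Finset.card_filter]

lemma cnt_le {m : ℕ} (x : Fin m → ℝ) (t : ℝ) : cnt x t ≤ m := by
  classical
  calc cnt x t ≤ (Finset.univ : Finset (Fin m)).card := Finset.card_filter_le _ _
  _ = m := by simp

lemma cnt_eq_of_all {m : ℕ} {x : Fin m → ℝ} {t : ℝ} (h : ∀ j, x j < t) : cnt x t = m := by
  classical
  unfold cnt
  rw [Finset.filter_true_of_mem (fun j _ => h j)]
  simp

lemma cnt_comp_perm {m : ℕ} (x : Fin m → ℝ) (σ : Equiv.Perm (Fin m)) (t : ℝ) :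
    cnt (x ∘ σ) t = cnt x t := by
  classical
  rw [cnt_eq_sum, cnt_eq_sum]
  exact Equiv.sum_comp σ (fun j => if x j < t then 1 else 0)

lemma cnt_insertNth {m : ℕ} (k : Fin (m + 1)) (t : ℝ) (y : Fin m → ℝ) (s : ℝ) :
    cnt (k.insertNth t y) s = (if t < s then 1 else 0) + cnt y s := by
  classical
  rw [cnt_eq_sum, cnt_eq_sum, Fin.sum_univ_succAbove _ k]
  simp

lemma measurable_cnt {m : ℕ} (t : ℝ) : Measurable (fun x : Fin m → ℝ => cnt x t) := by
  simp only [cnt_eq_sum]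
  exact Finset.measurable_sum _ fun j _ =>
    Measurable.ite (measurableSet_lt (measurable_pi_apply j) measurable_const)
      measurable_const measurable_const

/-- the event set in coordinates -/
noncomputable def cntSet (m : ℕ) (c : ℝ) : Set (Fin m → ℝ) :=
  {x | ∀ i : Fin m, cnt x (((i : ℕ) + 1) * c) ≤ (i : ℕ)}

lemma measurableSet_cntSet (m : ℕ) (c : ℝ) : MeasurableSet (cntSet m c) := by
  have : cntSet m c = ⋂ i : Fin m,
      (fun x : Fin m → ℝ => cnt x (((i : ℕ) + 1) * c)) ⁻¹' (Set.Iic (i : ℕ)) := by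
    ext x; simp [cntSet]
  rw [this]
  exact MeasurableSet.iInter fun i => (measurable_cnt _) measurableSet_Iic

/-- `ordStat x i` is the `i`-th smallest value among `x 0, ..., x (n-1)`. -/
noncomputable def ordStat {n : ℕ} (x : Fin n → ℝ) : Fin n → ℝ :=
  x ∘ Tuple.sort x

lemma ordStat_ge_iff {n : ℕ} (x : Fin n → ℝ) (t : ℝ) (i : Fin n) :
    t ≤ ordStat x i ↔ cnt x t ≤ (i : ℕ) := by

  have hmono : Monotone (ordStat x) := Tuple.monotone_sort x
  have hcnt : cnt x t = cnt (ordStat x) t := (cnt_comp_perm x (Tuple.sort x) t).symm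
  rw [hcnt]
  set y := ordStat x with hy
  constructor
  · intro h
    have hsub : Finset.univ.filter (fun j => y j < t) ⊆ Finset.Iio i := by
      intro j hj
      simp only [Finset.mem_filter] at hj
      rw [Finset.mem_Iio]
      by_contra hij
      exact absurd (lt_of_le_of_lt (le_trans h (hmono (le_of_not_gt hij))) hj.2) (lt_irrefl t)
    calc cnt y t ≤ (Finset.Iio i).card := Finset.card_le_card hsub
    _ = (i : ℕ) := Fin.card_Iio i
  · intro h
    by_contra hlt
    push_neg at hlt
    have hsub : Finset.Iic i ⊆ Finset.univ.filter (fun j => y j < t) := by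
      intro j hj
      rw [Finset.mem_Iic] at hj
      simp only [Finset.mem_filter, Finset.mem_univ, true_and]
      exact lt_of_le_of_lt (hmono hj) hlt
    have h2 := Finset.card_le_card hsub
    rw [Fin.card_Iic] at h2
    rw [cnt] at h
    omega

lemma pi_restrict_Iio {m : ℕ} {u t : ℝ} (htu : t ≤ u) :
    (Measure.pi fun _ : Fin m => (volume : Measure ℝ).restrict (Set.Ioo 0 u)).restrict
        (Set.pi Set.univ fun _ => Set.Iio t)
      = Measure.pi fun _ : Fin m => (volume : Measure ℝ).restrict (Set.Ioo 0 t) := by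
  refine (Measure.pi_eq fun s hs => ?_).symm
  rw [Measure.restrict_apply (MeasurableSet.univ_pi hs), ← Set.pi_inter_distrib,
    Measure.pi_pi]
  refine Finset.prod_congr rfl fun i _ => ?_
  rw [Measure.restrict_apply ((hs i).inter measurableSet_Iio),
    Measure.restrict_apply (hs i)]
  congr 1
  rw [Set.inter_assoc]
  congr 1
  ext z
  simp only [Set.mem_inter_iff, Set.mem_Iio, Set.mem_Ioo]
  constructor
  · rintro ⟨hz, h0, _⟩; exact ⟨h0, hz⟩
  · rintro ⟨h0, hz⟩; exact ⟨hz, h0, lt_of_lt_of_le hz htu⟩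

/-- `x` attains its maximum at `k`, and `k` is the largest such index. -/
def Mset {m : ℕ} (k : Fin (m + 1)) : Set (Fin (m + 1) → ℝ) :=
  {x | (∀ j, j < k → x j ≤ x k) ∧ (∀ j, k < j → x j < x k)}

lemma measurableSet_Mset {m : ℕ} (k : Fin (m + 1)) : MeasurableSet (Mset k) := by
  have h1 : MeasurableSet {x : Fin (m+1) → ℝ | ∀ j, j < k → x j ≤ x k} := by
    rw [Set.setOf_forall]
    refine MeasurableSet.iInter fun j => ?_
    rcases lt_or_ge j k with h | h
    · simp only [h, forall_true_left]
      exact measurableSet_le (measurable_pi_apply j) (measurable_pi_apply k)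
    · have : {x : Fin (m+1) → ℝ | j < k → x j ≤ x k} = Set.univ := by
        ext x; simp [not_lt_of_ge h]
      rw [this]; exact MeasurableSet.univ
  have h2 : MeasurableSet {x : Fin (m+1) → ℝ | ∀ j, k < j → x j < x k} := by
    rw [Set.setOf_forall]
    refine MeasurableSet.iInter fun j => ?_
    rcases lt_or_ge k j with h | h
    · simp only [h, forall_true_left]
      exact measurableSet_lt (measurable_pi_apply j) (measurable_pi_apply k)
    · have : {x : Fin (m+1) → ℝ | k < j → x j < x k} = Set.univ := by
        ext x; simp [not_lt_of_ge h]
      rw [this]; exact MeasurableSet.univ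
  exact h1.inter h2

lemma exists_mem_Mset {m : ℕ} (x : Fin (m + 1) → ℝ) : ∃ k, x ∈ Mset k := by
  classical
  obtain ⟨b, -, hb⟩ := Finset.exists_max_image (Finset.univ : Finset (Fin (m+1))) x ⟨0, Finset.mem_univ 0⟩
  set S := Finset.univ.filter (fun j : Fin (m+1) => ∀ j', x j' ≤ x j) with hS
  have hbS : b ∈ S := by
    simp only [hS, Finset.mem_filter, Finset.mem_univ, true_and]
    exact fun j' => hb j' (Finset.mem_univ j')
  have hSne : S.Nonempty := ⟨b, hbS⟩
  set k := S.max' hSne with hk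
  have hkS : k ∈ S := S.max'_mem hSne
  simp only [hS, Finset.mem_filter, Finset.mem_univ, true_and] at hkS
  refine ⟨k, fun j _ => hkS j, fun j hj => ?_⟩
  rcases lt_or_eq_of_le (hkS j) with h | h
  · exact h
  · exfalso
    have hjS : j ∈ S := by
      simp only [hS, Finset.mem_filter, Finset.mem_univ, true_and]
      intro j'
      exact h ▸ hkS j'
    exact absurd (S.le_max' j hjS) (not_le_of_gt hj)

lemma Mset_disjoint {m : ℕ} : Pairwise (Function.onFun Disjoint (fun k : Fin (m+1) => Mset k)) := by
  intro k k' hkk'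
  rw [Function.onFun, Set.disjoint_left]
  rintro x ⟨hx1, hx2⟩ ⟨hy1, hy2⟩
  rcases lt_or_gt_of_ne hkk' with h | h
  · exact absurd (hy1 k h) (not_le_of_gt (hx2 k' h))
  · exact absurd (hx1 k' h) (not_le_of_gt (hy2 k h))

lemma slice_empty {m : ℕ} (k : Fin (m + 1)) {c t : ℝ} (ht : t < ((m : ℝ) + 1) * c) :
    {y : Fin m → ℝ | k.insertNth t y ∈ cntSet (m + 1) c ∩ Mset k} = ∅ := by
  ext y
  simp only [Set.mem_setOf_eq, Set.mem_empty_iff_false, iff_false, Set.mem_inter_iff, not_and]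
  rintro hcnt hM
  have hall : ∀ j', (k.insertNth (α := fun _ => ℝ) t y) j' < ((m : ℝ) + 1) * c := by
    intro j'
    rcases eq_or_ne j' k with rfl | hne
    · simpa using ht
    · obtain ⟨j0, rfl⟩ := Fin.exists_succAbove_eq hne
      rw [Fin.insertNth_apply_succAbove]
      have hle : y j0 ≤ t := by
        rcases lt_or_gt_of_ne (Fin.succAbove_ne k j0) with h | h
        · have := hM.1 _ h
          rwa [Fin.insertNth_apply_succAbove, Fin.insertNth_apply_same] at this
        · have := le_of_lt (hM.2 _ h)
          rwa [Fin.insertNth_apply_succAbove, Fin.insertNth_apply_same] at this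
      exact lt_of_le_of_lt hle ht
  have h1 := hcnt (Fin.last m)
  have h2 : cnt (k.insertNth t y) (((Fin.last m : ℕ) + 1) * c) = m + 1 := by
    have : (((Fin.last m : ℕ) : ℝ) + 1) * c = ((m : ℝ) + 1) * c := by
      simp [Fin.val_last]
    rw [this]
    exact cnt_eq_of_all hall
  rw [h2, Fin.val_last] at h1
  omega

lemma measure_hyperplane {m : ℕ} (u t : ℝ) (j0 : Fin m) :
    (Measure.pi fun _ : Fin m => (volume : Measure ℝ).restrict (Set.Ioo 0 u))
      {y : Fin m → ℝ | y j0 = t} = 0 := by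
  classical
  set T := Set.pi Set.univ (fun i => if i = j0 then ({t} : Set ℝ) else Set.univ) with hT
  have hsub : {y : Fin m → ℝ | y j0 = t} ⊆ T := by
    intro y hy
    rw [hT, Set.mem_univ_pi]
    intro i
    rcases eq_or_ne i j0 with rfl | h
    · simpa using hy
    · simp [h]
  refine measure_mono_null hsub ?_
  rw [hT, Measure.pi_pi]
  apply Finset.prod_eq_zero (Finset.mem_univ j0)
  rw [if_pos rfl, Measure.restrict_apply (measurableSet_singleton t)]
  exact measure_mono_null Set.inter_subset_left Real.volume_singleton

lemma slice_measure_eq {m : ℕ} (k : Fin (m + 1)) {c u t : ℝ} (hc : 0 ≤ c)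
    (htu : t ≤ u) (hbt : ((m : ℝ) + 1) * c ≤ t) :
    (Measure.pi fun _ : Fin m => (volume : Measure ℝ).restrict (Set.Ioo 0 u))
        {y : Fin m → ℝ | k.insertNth t y ∈ cntSet (m + 1) c ∩ Mset k}
      = (Measure.pi fun _ : Fin m => (volume : Measure ℝ).restrict (Set.Ioo 0 t))
          (cntSet m c) := by
  classical
  set νu := (Measure.pi fun _ : Fin m => (volume : Measure ℝ).restrict (Set.Ioo 0 u)) with hνu
  set A := cntSet m c with hA
  have hAmeas : MeasurableSet A := measurableSet_cntSet m c
  set L := A ∩ Set.pi Set.univ (fun _ : Fin m => Set.Iio t) with hL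
  set slice := {y : Fin m → ℝ | k.insertNth t y ∈ cntSet (m + 1) c ∩ Mset k} with hslice
  -- threshold bounds
  have hthr : ∀ i : Fin (m + 1), ((i : ℕ) + 1 : ℝ) * c ≤ t := by
    intro i
    refine le_trans (mul_le_mul_of_nonneg_right ?_ hc) hbt
    have : (i : ℕ) + 1 ≤ m + 1 := i.2
    exact_mod_cast this
  have h1 : L ⊆ slice := by
    rintro y ⟨hyA, hyI⟩
    rw [Set.mem_univ_pi] at hyI
    constructor
    · intro i
      rw [cnt_insertNth, if_neg (not_lt.2 (hthr i)), zero_add]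
      rcases lt_or_ge (i : ℕ) m with h | h
      · exact hyA ⟨(i : ℕ), h⟩
      · have : (i : ℕ) = m := le_antisymm (Nat.lt_succ_iff.1 i.2) h
        rw [this]
        exact cnt_le y _
    · constructor
      · intro j hj
        obtain ⟨j0, rfl⟩ := Fin.exists_succAbove_eq hj.ne
        rw [Fin.insertNth_apply_succAbove, Fin.insertNth_apply_same]
        exact le_of_lt (hyI j0)
      · intro j hj
        obtain ⟨j0, rfl⟩ := Fin.exists_succAbove_eq hj.ne'
        rw [Fin.insertNth_apply_succAbove, Fin.insertNth_apply_same]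
        exact hyI j0
  have h2 : slice ⊆ A ∩ Set.pi Set.univ (fun _ : Fin m => Set.Iic t) := by
    rintro y ⟨hcnt, hM⟩
    constructor
    · intro i
      have hx := hcnt i.castSucc
      rw [cnt_insertNth, Fin.coe_castSucc] at hx
      exact le_trans (Nat.le_add_left _ _) hx
    · rw [Set.mem_univ_pi]
      intro j0
      have hne := Fin.succAbove_ne k j0
      have hkval : (k.insertNth (α := fun _ => ℝ) t y) k = t := by simp
      have hval : (k.insertNth (α := fun _ => ℝ) t y) (k.succAbove j0) = y j0 := by simp
      rcases lt_or_gt_of_ne hne with h | h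
      · have := hM.1 _ h
        rw [hval, hkval] at this
        exact this
      · have := le_of_lt (hM.2 _ h)
        rw [hval, hkval] at this
        exact this
  have hmL : νu L = (Measure.pi fun _ : Fin m => (volume : Measure ℝ).restrict (Set.Ioo 0 t)) A := by
    rw [hL, ← Measure.restrict_apply hAmeas, pi_restrict_Iio htu]
  have hN : νu (⋃ j0 : Fin m, {y : Fin m → ℝ | y j0 = t}) = 0 :=
    measure_iUnion_null fun j0 => measure_hyperplane u t j0
  have hsub2 : A ∩ Set.pi Set.univ (fun _ : Fin m => Set.Iic t)
      ⊆ L ∪ ⋃ j0 : Fin m, {y : Fin m → ℝ | y j0 = t} := by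
    rintro y ⟨hyA, hyI⟩
    rw [Set.mem_univ_pi] at hyI
    by_cases h : ∀ j0, y j0 < t
    · left
      exact ⟨hyA, Set.mem_univ_pi.2 h⟩
    · right
      push_neg at h
      obtain ⟨j0, hj0⟩ := h
      exact Set.mem_iUnion.2 ⟨j0, le_antisymm (hyI j0) hj0⟩
  refine le_antisymm ?_ ?_
  · calc νu slice ≤ νu (L ∪ ⋃ j0 : Fin m, {y : Fin m → ℝ | y j0 = t}) :=
        measure_mono (le_trans h2 hsub2)
    _ ≤ νu L + νu (⋃ j0 : Fin m, {y : Fin m → ℝ | y j0 = t}) := measure_union_le _ _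
    _ = νu L := by rw [hN, add_zero]
    _ = _ := hmL
  · rw [← hmL]
    exact measure_mono h1

lemma key_measure : ∀ (m : ℕ) (c u : ℝ), 0 ≤ c → 0 < u →
    (Measure.pi fun _ : Fin m => (volume : Measure ℝ).restrict (Set.Ioo 0 u)) (cntSet m c)
      = ENNReal.ofReal (u ^ m - m * c * u ^ (m - 1)) := by
  intro m
  induction m with
  | zero =>
    intro c u hc hu
    have h1 : cntSet 0 c = Set.univ := by
      ext x
      simp only [cntSet, Set.mem_setOf_eq, Set.mem_univ, iff_true]
      exact fun i => i.elim0
    rw [h1, Measure.pi_univ]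
    simp
  | succ m ih =>
    intro c u hc hu
    set b := ((m : ℝ) + 1) * c with hb
    have hb0 : 0 ≤ b := mul_nonneg (by positivity) hc
    set ν := (volume : Measure ℝ).restrict (Set.Ioo 0 u) with hν
    set g : ℝ → ℝ≥0∞ := fun t => ENNReal.ofReal (t ^ m - m * c * t ^ (m - 1)) with hg
    have hAmeas : ∀ k : Fin (m + 1), MeasurableSet (cntSet (m + 1) c ∩ Mset k) :=
      fun k => (measurableSet_cntSet _ _).inter (measurableSet_Mset k)
    have hcover : cntSet (m + 1) c = ⋃ k, cntSet (m + 1) c ∩ Mset k := by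
      ext x
      simp only [Set.mem_iUnion, Set.mem_inter_iff]
      constructor
      · intro hx
        obtain ⟨k, hk⟩ := exists_mem_Mset x
        exact ⟨k, hx, hk⟩
      · rintro ⟨k, hk, -⟩; exact hk
    have hdisj : Pairwise (Function.onFun Disjoint
        (fun k : Fin (m + 1) => cntSet (m + 1) c ∩ Mset k)) :=
      fun k k' h => (Mset_disjoint h).mono Set.inter_subset_right Set.inter_subset_right
    have hterm : ∀ k : Fin (m + 1),
        (Measure.pi fun _ : Fin (m + 1) => ν) (cntSet (m + 1) c ∩ Mset k)
          = ∫⁻ t, (Set.Ici b).indicator g t ∂ν := by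
      intro k
      set e := MeasurableEquiv.piFinSuccAbove (fun _ : Fin (m + 1) => ℝ) k with he
      have hmp := (measurePreserving_piFinSuccAbove (fun _ : Fin (m + 1) => ν) k).symm e
      rw [← hmp.measure_preimage (hAmeas k).nullMeasurableSet]
      have hB : MeasurableSet (⇑e.symm ⁻¹' (cntSet (m + 1) c ∩ Mset k)) :=
        e.symm.measurable (hAmeas k)
      rw [Measure.prod_apply hB]
      refine lintegral_congr_ae ((ae_restrict_iff' measurableSet_Ioo).2 (ae_of_all _ ?_))
      intro t ht
      show (Measure.pi fun _ : Fin m => ν) (Prod.mk t ⁻¹' (⇑e.symm ⁻¹' (cntSet (m + 1) c ∩ Mset k)))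
          = (Set.Ici b).indicator g t
      have hBset : Prod.mk t ⁻¹' (⇑e.symm ⁻¹' (cntSet (m + 1) c ∩ Mset k))
          = {y : Fin m → ℝ | k.insertNth t y ∈ cntSet (m + 1) c ∩ Mset k} := rfl
      rw [hBset]
      rcases le_or_gt b t with hbt | hbt
      · have hsl := slice_measure_eq k hc ht.2.le hbt
        rw [Set.indicator_of_mem (Set.mem_Ici.2 hbt) g]
        show (Measure.pi fun _ : Fin m => ν) {y | k.insertNth t y ∈ cntSet (m + 1) c ∩ Mset k}
            = ENNReal.ofReal (t ^ m - (m : ℝ) * c * t ^ (m - 1))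
        rw [← ih c t hc ht.1]
        exact hsl
      · rw [slice_empty k hbt, Set.indicator_of_notMem
          (by simpa using not_le.2 hbt : t ∉ Set.Ici b) g]
        exact measure_empty
    rw [hcover, measure_iUnion hdisj hAmeas]
    have hsum : ∑' k : Fin (m + 1), (Measure.pi fun _ : Fin (m + 1) => ν)
        (cntSet (m + 1) c ∩ Mset k) = (m + 1 : ℕ) * ∫⁻ t, (Set.Ici b).indicator g t ∂ν := by
      simp_rw [hterm]
      rw [tsum_fintype]
      rw [Finset.sum_const, Finset.card_univ, Fintype.card_fin, nsmul_eq_mul]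
    rw [hsum]
    have hres : ∫⁻ t, (Set.Ici b).indicator g t ∂ν
        = ∫⁻ t, g t ∂((volume : Measure ℝ).restrict (Set.Ici b ∩ Set.Ioo 0 u)) := by
      rw [lintegral_indicator measurableSet_Ici, hν, Measure.restrict_restrict measurableSet_Ici]
    rw [hres]
    rcases le_or_gt u b with hub | hub
    · have hempty : Set.Ici b ∩ Set.Ioo 0 u = (∅ : Set ℝ) := by
        ext x
        simp only [Set.mem_inter_iff, Set.mem_Ici, Set.mem_Ioo, Set.mem_empty_iff_false,
          iff_false, not_and]
        intro hbx h0x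
        intro hxu
        linarith
      rw [hempty, Measure.restrict_empty, lintegral_zero_measure, mul_zero]
      symm
      rw [ENNReal.ofReal_eq_zero]
      push_cast
      rw [← hb]
      nlinarith [pow_pos hu m, mul_le_mul_of_nonneg_left hub (le_of_lt (pow_pos hu m)),
        pow_succ u m]
    · have hae : (Set.Ici b ∩ Set.Ioo 0 u : Set ℝ) =ᵐ[volume] Set.Ioc b u := by
        have hsub1 : (Set.Ici b ∩ Set.Ioo 0 u) \ Set.Ioc b u ⊆ {b} := by
          rintro x ⟨⟨hx1, hx2, hx3⟩, hx4⟩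
          simp only [Set.mem_Ioc, not_and, not_le] at hx4
          rcases lt_or_eq_of_le (Set.mem_Ici.1 hx1) with h | h
          · exact absurd (le_of_lt hx3) (not_le.2 (hx4 h))
          · simp [← h]
        have hsub2 : Set.Ioc b u \ (Set.Ici b ∩ Set.Ioo 0 u) ⊆ {u} := by
          rintro x ⟨⟨hx1, hx2⟩, hx3⟩
          simp only [Set.mem_inter_iff, Set.mem_Ici, Set.mem_Ioo, not_and] at hx3
          have h0 : 0 < x := lt_of_le_of_lt hb0 hx1
          rcases lt_or_eq_of_le hx2 with h | h
          · exact absurd h (hx3 (le_of_lt hx1) h0)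
          · simp [h]
        have h1 : volume ((Set.Ici b ∩ Set.Ioo 0 u) \ Set.Ioc b u) = 0 :=
          measure_mono_null hsub1 Real.volume_singleton
        have h2 : volume (Set.Ioc b u \ (Set.Ici b ∩ Set.Ioo 0 u)) = 0 :=
          measure_mono_null hsub2 Real.volume_singleton
        exact ae_eq_set.2 ⟨h1, h2⟩
      rw [Measure.restrict_congr_set hae]
      have hcont : Continuous (fun t : ℝ => t ^ m - (m : ℝ) * c * t ^ (m - 1)) := by
        fun_prop
      have hint : Integrable (fun t : ℝ => t ^ m - (m : ℝ) * c * t ^ (m - 1))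
          ((volume : Measure ℝ).restrict (Set.Ioc b u)) := hcont.integrableOn_Ioc
      have hmc : (m : ℝ) * c ≤ b := by
        rw [hb]; nlinarith
      have hnn : 0 ≤ᵐ[(volume : Measure ℝ).restrict (Set.Ioc b u)]
          (fun t : ℝ => t ^ m - (m : ℝ) * c * t ^ (m - 1)) := by
        refine (ae_restrict_iff' measurableSet_Ioc).2 (ae_of_all _ ?_)
        rintro t ⟨htb, htu⟩
        show (0:ℝ) ≤ t ^ m - (m : ℝ) * c * t ^ (m - 1)
        have ht0 : 0 < t := lt_of_le_of_lt hb0 htb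
        rcases Nat.eq_zero_or_pos m with hm | hm
        · subst hm; simp
        · have hm1 : m - 1 + 1 = m := Nat.succ_pred_eq_of_pos hm
          have hle : (m : ℝ) * c * t ^ (m - 1) ≤ t * t ^ (m - 1) :=
            mul_le_mul_of_nonneg_right (le_of_lt (lt_of_le_of_lt hmc htb))
              (pow_nonneg ht0.le _)
          rw [← pow_succ'] at hle
          rw [hm1] at hle
          linarith
      rw [hg]
      rw [← ofReal_integral_eq_lintegral_ofReal hint hnn]
      have hIoc : ∫ t in Set.Ioc b u, (t ^ m - (m : ℝ) * c * t ^ (m - 1))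
          = ∫ t in b..u, (t ^ m - (m : ℝ) * c * t ^ (m - 1)) :=
        (intervalIntegral.integral_of_le hub.le).symm
      rw [hIoc]
      have hI : ∫ t in b..u, (t ^ m - (m : ℝ) * c * t ^ (m - 1))
          = (u ^ (m + 1) - b ^ (m + 1)) / ((m : ℝ) + 1)
            - (m : ℝ) * c * ((u ^ (m - 1 + 1) - b ^ (m - 1 + 1)) / ((m - 1 : ℕ) + 1)) := by
        rw [intervalIntegral.integral_sub (f := fun t : ℝ => t ^ m)
            (g := fun t : ℝ => (m : ℝ) * c * t ^ (m - 1)) ((continuous_pow m).intervalIntegrable b u)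
            ((continuous_const.mul (continuous_pow (m - 1))).intervalIntegrable b u)]
        rw [intervalIntegral.integral_const_mul, integral_pow, integral_pow]
      rw [hI]
      have hcast : ((m + 1 : ℕ) : ℝ≥0∞) = ENNReal.ofReal ((m : ℝ) + 1) := by
        rw [← ENNReal.ofReal_natCast]
        norm_num
      rw [hcast, ← ENNReal.ofReal_mul (by positivity)]
      congr 1
      have hmm : (m + 1 : ℕ) - 1 = m := rfl
      rw [hmm]
      push_cast
      rcases Nat.eq_zero_or_pos m with hm | hm
      · subst hm
        simp only [pow_zero, Nat.cast_zero, pow_one]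
        rw [hb]
        ring
      · have hm1 : m - 1 + 1 = m := Nat.succ_pred_eq_of_pos hm
        rw [hm1]
        have hmne : (m : ℝ) ≠ 0 := Nat.cast_ne_zero.2 (Nat.pos_iff_ne_zero.1 hm)
        rw [show ((m - 1 : ℕ) : ℝ) + 1 = m by exact_mod_cast hm1]
        have hbpow : b ^ (m + 1) = ((m : ℝ) + 1) * c * b ^ m := by
          rw [pow_succ]; rw [hb]; ring
        field_simp
        rw [hb]
        ring

lemma map_fun_eq_pi {Ω : Type*} [MeasurableSpace Ω] {μ : Measure Ω} [IsProbabilityMeasure μ]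
    {n : ℕ} (U : Fin n → Ω → ℝ) (hmeas : ∀ i, Measurable (U i))
    (hindep : iIndepFun U μ)
    (hunif : ∀ i, Measure.map (U i) μ = volume.restrict (Set.Ioo (0 : ℝ) 1)) :
    Measure.map (fun ω (i : Fin n) => U i ω) μ
      = Measure.pi (fun _ : Fin n => (volume : Measure ℝ).restrict (Set.Ioo (0 : ℝ) 1)) := by
  refine (Measure.pi_eq fun s hs => ?_).symm
  rw [Measure.map_apply (measurable_pi_lambda _ hmeas) (MeasurableSet.univ_pi hs)]
  have hpre : (fun ω (i : Fin n) => U i ω) ⁻¹' Set.pi Set.univ s = ⋂ i, U i ⁻¹' s i := by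
    ext ω
    simp [Set.mem_univ_pi]
  rw [hpre, hindep.meas_iInter (fun i => ⟨s i, hs i, rfl⟩)]
  refine Finset.prod_congr rfl fun i _ => ?_
  rw [← hunif i, Measure.map_apply (hmeas i) (hs i)]

/-- Simes equality under independence: if `U_1, ..., U_n` are i.i.d. uniform on `(0,1)`,
then for `α ∈ (0,1]`, `P(U_{i:n} ≥ iα/n for all i) = 1 - α`. -/
theorem simes_equality_uniform
    {Ω : Type*} [MeasurableSpace Ω] {μ : Measure Ω} [IsProbabilityMeasure μ]
    {n : ℕ} (hn : 0 < n) (U : Fin n → Ω → ℝ)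
    (hmeas : ∀ i, Measurable (U i))
    (hindep : iIndepFun U μ)
    (hunif : ∀ i, Measure.map (U i) μ = volume.restrict (Set.Ioo (0 : ℝ) 1))
    (α : ℝ) (hα : α ∈ Set.Ioc (0 : ℝ) 1) :
    μ {ω | ∀ i : Fin n, ((i : ℕ) + 1) * α / n ≤ ordStat (fun j => U j ω) i}
      = ENNReal.ofReal (1 - α) := by
  have hn0 : (n : ℝ) ≠ 0 := Nat.cast_ne_zero.2 hn.ne'
  have hc : (0 : ℝ) ≤ α / n := div_nonneg hα.1.le (Nat.cast_nonneg n)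
  have hset : {ω | ∀ i : Fin n, ((i : ℕ) + 1) * α / n ≤ ordStat (fun j => U j ω) i}
      = (fun ω (i : Fin n) => U i ω) ⁻¹' cntSet n (α / n) := by
    ext ω
    simp only [Set.mem_setOf_eq, Set.mem_preimage, cntSet]
    refine forall_congr' fun i => ?_
    rw [mul_div_assoc, ordStat_ge_iff]
  rw [hset, ← Measure.map_apply (measurable_pi_lambda _ hmeas) (measurableSet_cntSet n (α / n)),
    map_fun_eq_pi U hmeas hindep hunif, key_measure n (α / n) 1 hc one_pos]
  congr 1
  rw [one_pow, one_pow, mul_one, mul_comm ((n : ℝ)) (α / n), div_mul_cancel₀ α hn0]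
end

section
/- Let Z be a real-valued random variable, let ψ : ℝ → [0, ∞) be a bounded nondecreasing function, let a ≤ b be reals, and let c, d > 0 satisfy c · P(Z ≤ b) ≥ d · P(Z ≤ a) with P(Z ≤ b) > 0. Then E[ψ(Z)(c · 1{Z ≤ b} − d · 1{Z ≤ a})] ≥ 0. -/
open MeasureTheory

/-- Key monotonicity step in Theorem 2.1: for a bounded nonnegative nondecreasing `ψ`,
`a ≤ b`, and positive constants `c, d` with `c · P(Z ≤ b) ≥ d · P(Z ≤ a)` and
`P(Z ≤ b) > 0`, one has `E[ψ(Z)(c·1{Z ≤ b} − d·1{Z ≤ a})] ≥ 0`. -/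
theorem expectation_monotone_indicator_nonneg
    {Ω : Type*} [MeasurableSpace Ω] {μ : Measure Ω} [IsProbabilityMeasure μ]
    (Z : Ω → ℝ) (hZ : Measurable Z)
    (ψ : ℝ → ℝ) (hψ_mono : Monotone ψ) (hψ_nonneg : ∀ t, 0 ≤ ψ t)
    (M : ℝ) (hψ_bdd : ∀ t, ψ t ≤ M)
    (a b : ℝ) (hab : a ≤ b) (c d : ℝ) (hc : 0 < c) (hd : 0 < d)
    (hP : d * (μ {ω | Z ω ≤ a}).toReal ≤ c * (μ {ω | Z ω ≤ b}).toReal)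
    (hPb : 0 < μ {ω | Z ω ≤ b}) :
    0 ≤ ∫ ω, ψ (Z ω) *
        ((if Z ω ≤ b then c else 0) - (if Z ω ≤ a then d else 0)) ∂μ := by
  classical
  set A := {ω | Z ω ≤ a} with hA
  set B := {ω | Z ω ≤ b} with hB
  have hAm : MeasurableSet A := hZ measurableSet_Iic
  have hBm : MeasurableSet B := hZ measurableSet_Iic
  have hψm : Measurable ψ := hψ_mono.measurable
  have hint_psi : Integrable (fun ω => ψ (Z ω)) μ := by
    refine (integrable_const M).mono' ((hψm.comp hZ).aestronglyMeasurable) ?_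
    filter_upwards with ω
    rw [Real.norm_eq_abs, abs_of_nonneg (hψ_nonneg _)]
    exact hψ_bdd _
  have hf_eq : (fun ω => ψ (Z ω) *
        ((if Z ω ≤ b then c else 0) - (if Z ω ≤ a then d else 0)))
      = fun ω => B.indicator (fun ω => c * ψ (Z ω)) ω
          - A.indicator (fun ω => d * ψ (Z ω)) ω := by
    funext ω
    simp only [Set.indicator_apply, hA, hB, Set.mem_setOf_eq]
    split_ifs <;> ring
  have hint_f : Integrable (fun ω => B.indicator (fun ω => c * ψ (Z ω)) ω
      - A.indicator (fun ω => d * ψ (Z ω)) ω) μ :=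
    ((hint_psi.const_mul c).indicator hBm).sub ((hint_psi.const_mul d).indicator hAm)
  rw [hf_eq]
  rcases le_or_gt d c with hdc | hcd
  · refine integral_nonneg fun ω => ?_
    simp only [Pi.zero_apply, Set.indicator_apply, hA, hB, Set.mem_setOf_eq]
    by_cases h2 : Z ω ≤ a
    · have h1 : Z ω ≤ b := h2.trans hab
      simp only [if_pos h1, if_pos h2]
      nlinarith [hψ_nonneg (Z ω)]
    · by_cases h1 : Z ω ≤ b
      · simp only [if_pos h1, if_neg h2]
        nlinarith [hψ_nonneg (Z ω)]
      · simp [if_neg h1, if_neg h2]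
  · have hg_int : Integrable (fun ω => B.indicator (fun _ => c * ψ a) ω
        - A.indicator (fun _ => d * ψ a) ω) μ :=
      ((integrable_const _).indicator hBm).sub ((integrable_const _).indicator hAm)
    have hle : ∀ ω, (B.indicator (fun _ => c * ψ a) ω - A.indicator (fun _ => d * ψ a) ω)
        ≤ (B.indicator (fun ω => c * ψ (Z ω)) ω - A.indicator (fun ω => d * ψ (Z ω)) ω) := by
      intro ω
      simp only [Set.indicator_apply, hA, hB, Set.mem_setOf_eq]
      by_cases h2 : Z ω ≤ a
      · have h1 : Z ω ≤ b := h2.trans hab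
        simp only [if_pos h1, if_pos h2]
        nlinarith [hψ_mono h2]
      · by_cases h1 : Z ω ≤ b
        · simp only [if_pos h1, if_neg h2]
          nlinarith [hψ_mono (le_of_not_ge h2)]
        · simp [if_neg h1, if_neg h2]
    calc (0:ℝ) ≤ ∫ ω, (B.indicator (fun _ => c * ψ a) ω - A.indicator (fun _ => d * ψ a) ω) ∂μ := by
          rw [integral_sub ((integrable_const _).indicator hBm)
            ((integrable_const _).indicator hAm),
            integral_indicator_const _ hBm, integral_indicator_const _ hAm,
            smul_eq_mul, smul_eq_mul, measureReal_def, measureReal_def]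
          nlinarith [hψ_nonneg a]
      _ ≤ _ := integral_mono hg_int hint_f hle
end

section
/- Let X_1, ..., X_n be independent random variables each with continuous (atomless) distribution and common CDF F, and let a_1 ≤ ... ≤ a_n be such that F(a_j) = jα/n for all j, where α ∈ [0,1]. Then P(X_{1:n} ≥ a_1, ..., X_{n:n} ≥ a_n) = 1 − α. -/
open MeasureTheory ProbabilityTheory

open Finset

def lowCount {m N : ℕ} (f : Fin m → Fin N) (j : ℕ) : ℕ :=
  (Finset.univ.filter (fun k => (f k : ℕ) ≤ j)).card

def PF (N m : ℕ) : Finset (Fin m → Fin (N+1)) :=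
  Finset.univ.filter (fun f => ∀ j : ℕ, j < N → lowCount f j ≤ j)

def topSet {N m : ℕ} (f : Fin m → Fin (N+1)) : Finset (Fin m) :=
  Finset.univ.filter (fun k => f k = Fin.last N)

def NVset (N s : ℕ) : Finset (Fin s → Fin (N+1)) :=
  (PF N s).filter (fun g => ∀ k, g k ≠ Fin.last N)

abbrev NV (N s : ℕ) : ℕ := (NVset N s).card

lemma lowCount_congr {m N N' : ℕ} {f : Fin m → Fin N} {g : Fin m → Fin N'} (h : ∀ k, (f k : ℕ) = (g k : ℕ)) (j : ℕ) :
    lowCount f j = lowCount g j := by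
  unfold lowCount
  congr 1
  apply Finset.filter_congr
  intro k _
  simp [h k]

lemma NV_zero_s (N : ℕ) : NV N 0 = 1 := by
  have : NVset N 0 = Finset.univ := by
    apply Finset.eq_univ_of_forall
    intro g
    simp only [NVset, PF, mem_filter, mem_univ, true_and]
    refine ⟨fun j _ => ?_, fun k => k.elim0⟩
    have : lowCount g j = 0 := by
      unfold lowCount
      simp [Finset.filter_eq_empty_iff]
    omega
  rw [NV, this]
  simp [Finset.card_univ]

lemma NV_large (M s : ℕ) (hs : M < s) : NV (M+1) s = 0 := by
  rw [NV, Finset.card_eq_zero, Finset.eq_empty_iff_forall_notMem]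
  intro g hg
  simp only [NVset, PF, mem_filter, mem_univ, true_and] at hg
  obtain ⟨hcond, hfree⟩ := hg
  have h1 : lowCount g M ≤ M := hcond M (by omega)
  have h2 : lowCount g M = s := by
    unfold lowCount
    have : Finset.univ.filter (fun k : Fin s => ((g k : ℕ) ≤ M)) = Finset.univ := by
      apply Finset.filter_true_of_mem
      intro k _
      have := Fin.val_lt_last (hfree k)
      omega
    rw [this, Finset.card_univ, Fintype.card_fin]
  omega

lemma NV_castSucc (M s : ℕ) (hs : s ≤ M) : NV (M+1) s = (PF M s).card := by
  symm
  refine Finset.card_bij' (fun f _ => (Fin.castSucc ∘ f))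
    (fun g _ => fun k => (⟨min (g k : ℕ) M, by omega⟩ : Fin (M+1))) ?hi ?hj ?left ?right
  case hi =>
    intro f hf
    simp only [PF, mem_filter, mem_univ, true_and] at hf
    simp only [NVset, PF, mem_filter, mem_univ, true_and]
    refine ⟨fun j hj => ?_, fun k => (Fin.castSucc_lt_last (f k)).ne⟩
    have hlc : lowCount (Fin.castSucc ∘ f) j = lowCount f j := by
      apply lowCount_congr; intro k; simp
    rcases Nat.lt_or_ge j M with h | h
    · rw [hlc]; exact hf j h
    · have h1 : lowCount (Fin.castSucc ∘ f) j ≤ s := by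
        refine le_trans (Finset.card_filter_le _ _) ?_
        rw [Finset.card_univ, Fintype.card_fin]
      omega
  case hj =>
    intro g hg
    simp only [NVset, PF, mem_filter, mem_univ, true_and] at hg
    simp only [PF, mem_filter, mem_univ, true_and]
    intro j hj
    have hlc : lowCount (fun k => (⟨min (g k : ℕ) M, by omega⟩ : Fin (M+1))) j
        = lowCount g j := by
      unfold lowCount
      congr 1
      apply Finset.filter_congr
      intro k _
      have := Fin.val_lt_last (hg.2 k)
      simp only [eq_iff_iff]
      constructor <;> intro <;> omega
    rw [hlc]
    exact hg.1 j (by omega)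
  case left =>
    intro f hf
    funext k
    apply Fin.ext
    simp only [Function.comp_apply, Fin.coe_castSucc]
    have hfk : (f k : ℕ) ≤ M := Nat.lt_succ_iff.mp (f k).isLt
    simp [Nat.min_eq_left hfk]
  case right =>
    intro g hg
    simp only [NVset, mem_filter] at hg
    funext k
    apply Fin.ext
    have := Fin.val_lt_last (hg.2 k)
    simp only [Function.comp_apply, Fin.coe_castSucc]
    omega

lemma fiber_card (N m : ℕ) (R : Finset (Fin m)) :
    (((PF N m).filter (fun f => topSet f = R)).card) = NV N (m - R.card) := by
  classical
  have hsc : (Rᶜ).card = m - R.card := by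
    rw [Finset.card_compl, Fintype.card_fin]
  let e : Fin (m - R.card) ≃ {x // x ∈ Rᶜ} := (finCongr hsc.symm).trans (Rᶜ.equivFin).symm
  have he : ∀ i, (e i : Fin m) ∈ Rᶜ := fun i => (e i).2
  -- count transfer lemma
  have key : ∀ f : Fin m → Fin (N+1), (∀ k, f k = Fin.last N ↔ k ∈ R) →
      ∀ j : ℕ, j < N → lowCount (fun i => f ((e i : Fin m))) j = lowCount f j := by
    intro f hf j hj
    unfold lowCount
    apply Finset.card_bij (fun i _ => ((e i : Fin m)))
    · intro i hi
      simp only [mem_filter, mem_univ, true_and] at hi ⊢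
      exact hi
    · intro i _ i' _ h
      exact e.injective (Subtype.ext h)
    · intro k hk
      simp only [mem_filter, mem_univ, true_and] at hk
      have hkR : k ∈ Rᶜ := by
        rw [Finset.mem_compl]
        intro hkR
        have := (hf k).mpr hkR
        rw [this] at hk
        simp only [Fin.val_last] at hk
        omega
      refine ⟨e.symm ⟨k, hkR⟩, Finset.mem_filter.mpr ⟨mem_univ _, ?_⟩, ?_⟩
      · simpa using hk
      · simp
  have hmem_iff : ∀ f : Fin m → Fin (N+1), topSet f = R → (∀ k, f k = Fin.last N ↔ k ∈ R) := by
    intro f htop k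
    rw [← htop]
    simp [topSet]
  apply Finset.card_bij' (fun f _ => fun i => f ((e i : Fin m)))
    (fun g _ => fun k => if hk : k ∈ R then Fin.last N else g (e.symm ⟨k, Finset.mem_compl.mpr hk⟩))
  case hi =>
    intro f hf
    simp only [mem_filter] at hf
    obtain ⟨hfPF, htop⟩ := hf
    simp only [PF, mem_filter, mem_univ, true_and] at hfPF
    have hf' := hmem_iff f htop
    simp only [NVset, PF, mem_filter, mem_univ, true_and]
    constructor
    · intro j hj
      rw [key f hf' j hj]
      exact hfPF j hj
    · intro i hlast
      exact absurd ((hf' _).mp hlast) (Finset.mem_compl.mp (he i))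
  case hj =>
    intro g hg
    simp only [NVset, PF, mem_filter, mem_univ, true_and] at hg
    set f := fun k => if hk : k ∈ R then Fin.last N else g (e.symm ⟨k, Finset.mem_compl.mpr hk⟩) with hfdef
    have hf' : ∀ k, f k = Fin.last N ↔ k ∈ R := by
      intro k
      by_cases hk : k ∈ R
      · simp [hfdef, hk]
      · simp only [hfdef, dif_neg hk]
        exact ⟨fun h => absurd h (hg.2 _), fun h => absurd h hk⟩
    have hcomp : (fun i => f ((e i : Fin m))) = g := by
      funext i
      have hi : (e i : Fin m) ∉ R := Finset.mem_compl.mp (he i)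
      simp only [hfdef, dif_neg hi]
      exact congrArg g ((congrArg e.symm (Subtype.ext rfl)).trans (e.symm_apply_apply i))
    simp only [mem_filter, mem_univ, true_and]
    constructor
    · simp only [PF, mem_filter, mem_univ, true_and]
      intro j hj
      rw [← key f hf' j hj, hcomp]
      exact hg.1 j hj
    · ext k
      simp only [topSet, mem_filter, mem_univ, true_and]
      exact hf' k
  case left_inv =>
    intro f hf
    simp only [mem_filter] at hf
    have hf' := hmem_iff f hf.2
    funext k
    by_cases hk : k ∈ R
    · simp only [dif_pos hk]
      exact ((hf' k).mpr hk).symm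
    · simp only [dif_neg hk]
      show f ((e (e.symm ⟨k, Finset.mem_compl.mpr hk⟩) : {x // x ∈ Rᶜ}) : Fin m) = f k
      rw [Equiv.apply_symm_apply]
  case right_inv =>
    intro g hg
    funext i
    have hi : (e i : Fin m) ∉ R := Finset.mem_compl.mp (he i)
    simp only [dif_neg hi]
    exact congrArg g ((congrArg e.symm (Subtype.ext rfl)).trans (e.symm_apply_apply i))

lemma PF_sum (N m : ℕ) (u z : ℝ) :
    ∑ f ∈ PF N m, ∏ k, (if f k = Fin.last N then z else u)
      = ∑ t ∈ range (m+1), (m.choose t : ℝ) * z^t * u^(m-t) * NV N (m-t) := by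
  classical
  have grp := Finset.sum_fiberwise_of_maps_to
      (s := PF N m) (t := (Finset.univ : Finset (Fin m)).powerset)
      (g := fun f => topSet f)
      (fun f _ => Finset.mem_powerset.mpr (Finset.subset_univ _))
      (fun f => ∏ k, (if f k = Fin.last N then z else u))
  rw [← grp]
  have inner : ∀ R ∈ (Finset.univ : Finset (Fin m)).powerset,
      ∑ f ∈ (PF N m).filter (fun f => topSet f = R), ∏ k, (if f k = Fin.last N then z else u)
        = (NV N (m - R.card) : ℝ) * z^R.card * u^(m - R.card) := by
    intro R _
    have hconst : ∀ f ∈ (PF N m).filter (fun f => topSet f = R),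
        ∏ k, (if f k = Fin.last N then z else u) = z^R.card * u^(m - R.card) := by
      intro f hf
      simp only [mem_filter] at hf
      have hf' : ∀ k, f k = Fin.last N ↔ k ∈ R := by
        intro k
        rw [← hf.2]
        simp [topSet]
      have : ∀ k : Fin m, (if f k = Fin.last N then z else u) = (if k ∈ R then z else u) := by
        intro k
        by_cases hk : k ∈ R
        · simp [hk, (hf' k).mpr hk]
        · simp only [if_neg hk]
          rw [if_neg (fun h => hk ((hf' k).mp h))]
      rw [Finset.prod_congr rfl (fun k _ => this k), Finset.prod_ite (fun _ => z) (fun _ => u)]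
      rw [Finset.prod_const, Finset.prod_const]
      congr 1
      · congr 1
        simp
      · congr 1
        have : Finset.univ.filter (fun k => k ∉ R) = Rᶜ := by
          simp [Finset.compl_eq_univ_sdiff, Finset.sdiff_eq_filter]
        rw [this, Finset.card_compl, Fintype.card_fin]
    rw [Finset.sum_congr rfl hconst, Finset.sum_const, fiber_card, nsmul_eq_mul]
    ring
  rw [Finset.sum_congr rfl inner]
  rw [Finset.sum_powerset (Finset.univ : Finset (Fin m))
    (fun R => (NV N (m - R.card) : ℝ) * z^R.card * u^(m - R.card))]
  rw [Finset.card_univ, Fintype.card_fin]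
  refine Finset.sum_congr rfl (fun t ht => ?_)
  have : ∀ R ∈ Finset.powersetCard t (Finset.univ : Finset (Fin m)),
      (NV N (m - R.card) : ℝ) * z^R.card * u^(m - R.card)
        = (NV N (m - t) : ℝ) * z^t * u^(m - t) := by
    intro R hR
    rw [(Finset.mem_powersetCard.mp hR).2]
  rw [Finset.sum_congr rfl this, Finset.sum_const, Finset.card_powersetCard,
    Finset.card_univ, Fintype.card_fin, nsmul_eq_mul]
  ring

lemma bin1 (x y : ℝ) (m : ℕ) :
    ∑ r ∈ range (m+1), (m.choose r : ℝ) * x^r * y^(m-r) = (x+y)^m := by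
  rw [add_pow]
  exact Finset.sum_congr rfl (fun r _ => by ring)

lemma bin2 (x y : ℝ) (m : ℕ) :
    ∑ r ∈ range (m+1), (m.choose r : ℝ) * r * x^(r-1) * y^(m-r) = m * (x+y)^(m-1) := by
  cases m with
  | zero => simp
  | succ M =>
    rw [Finset.sum_range_succ']
    simp only [Nat.cast_zero, mul_zero, zero_mul, add_zero]
    have h : ∀ k : ℕ, ((M+1).choose (k+1) : ℝ) * (k+1) = (M+1) * (M.choose k) := by
      intro k
      have := Nat.add_one_mul_choose_eq M k
      have : ((M.succ * M.choose k : ℕ) : ℝ) = ((M.succ.choose k.succ * k.succ : ℕ) : ℝ) := by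
        exact congrArg Nat.cast this
      push_cast at this
      linarith
    have step : ∑ k ∈ range (M+1), ((M+1).choose (k+1) : ℝ) * ((k:ℕ)+1 : ℕ) * x^(k+1-1) * y^(M+1-(k+1))
        = (M+1) * ∑ k ∈ range (M+1), (M.choose k : ℝ) * x^k * y^(M-k) := by
      rw [Finset.mul_sum]
      refine Finset.sum_congr rfl (fun k _ => ?_)
      have hk := h k
      rw [show (k+1-1 : ℕ) = k from by omega, show (M+1 : ℕ) - (k+1) = M - k from by omega]
      push_cast at hk ⊢
      linear_combination hk * (x^k * y^(M-k))
    rw [step, bin1]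
    norm_num

lemma PF_card (N m : ℕ) : ((PF N m).card : ℝ)
    = ∑ t ∈ range (m+1), (m.choose t : ℝ) * NV N (m-t) := by
  have h := PF_sum N m 1 1
  simp only [ite_self, Finset.prod_const_one, one_pow, mul_one, Finset.sum_const,
    nsmul_eq_mul, mul_one] at h
  exact h

lemma NV_formula : ∀ N, 1 ≤ N → ∀ s, s ≤ N → (NV N s : ℝ) = (N:ℝ)^s - s * (N:ℝ)^(s-1) := by
  intro N
  induction N with
  | zero => omega
  | succ M ih =>
    intro _ s hs
    rcases Nat.eq_zero_or_pos s with hs0 | hs1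
    · subst hs0
      rw [NV_zero_s]
      simp
    rcases Nat.lt_or_ge s (M+1) with hlt | hge
    · -- 1 ≤ s ≤ M, hence 1 ≤ M
      have hsM : s ≤ M := by omega
      have hM1 : 1 ≤ M := by omega
      rw [NV_castSucc M s hsM, PF_card]
      -- reindex: ∑ t C(s,t) NV M (s-t) = ∑ r C(s,r) NV M r
      have hre : ∑ t ∈ range (s+1), (s.choose t : ℝ) * NV M (s-t)
          = ∑ r ∈ range (s+1), (s.choose r : ℝ) * NV M r := by
        rw [← Finset.sum_range_reflect (fun r => (s.choose r : ℝ) * NV M r) (s+1)]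
        refine Finset.sum_congr rfl (fun t ht => ?_)
        simp only [Finset.mem_range] at ht
        rw [show s + 1 - 1 - t = s - t from by omega,
          Nat.choose_symm (by omega : t ≤ s)]
      rw [hre]
      have hterm : ∀ r ∈ range (s+1), (s.choose r : ℝ) * NV M r
          = (s.choose r : ℝ) * (M:ℝ)^r * 1^(s-r) - ((s.choose r : ℝ) * r * (M:ℝ)^(r-1) * 1^(s-r)) := by
        intro r hr
        simp only [Finset.mem_range] at hr
        rw [ih hM1 r (by omega)]
        ring
      rw [Finset.sum_congr rfl hterm, Finset.sum_sub_distrib, bin1, bin2]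
      push_cast
      ring
    · -- s = M+1
      have hsM : s = M+1 := by omega
      subst hsM
      rw [NV_large M (M+1) (by omega)]
      simp only [Nat.cast_zero, Nat.add_sub_cancel]
      push_cast
      rw [pow_succ]
      ring

lemma comb_main (n : ℕ) (hn : 0 < n) (α : ℝ) (hα0 : 0 ≤ α) (hα1 : α ≤ 1) :
    ∑ f ∈ PF n n, ∏ k, (if f k = Fin.last n then (1-α) else α/n) = 1 - α := by
  have hn0 : (n:ℝ) ≠ 0 := Nat.cast_ne_zero.mpr (by omega)
  rw [PF_sum]
  have hre : ∑ t ∈ range (n+1), (n.choose t : ℝ) * (1-α)^t * (α/n)^(n-t) * NV n (n-t)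
      = ∑ s ∈ range (n+1), (n.choose s : ℝ) * (1-α)^(n-s) * (α/n)^s * NV n s := by
    rw [← Finset.sum_range_reflect
      (fun s => (n.choose s : ℝ) * (1-α)^(n-s) * (α/n)^s * NV n s) (n+1)]
    refine Finset.sum_congr rfl (fun t ht => ?_)
    simp only [Finset.mem_range] at ht
    rw [show n+1-1-t = n-t from by omega, Nat.choose_symm (by omega : t ≤ n),
      show n-(n-t) = t from by omega]
  rw [hre]
  have hterm : ∀ s ∈ range (n+1), (n.choose s : ℝ) * (1-α)^(n-s) * (α/n)^s * NV n s
      = (n.choose s : ℝ) * α^s * (1-α)^(n-s)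
        - (α/n) * ((n.choose s : ℝ) * s * α^(s-1) * (1-α)^(n-s)) := by
    intro s hs
    simp only [Finset.mem_range] at hs
    rw [NV_formula n hn s (by omega)]
    cases s with
    | zero => simp
    | succ r =>
      have h1 : (α/(n:ℝ))^(r+1) * (n:ℝ)^(r+1) = α^(r+1) := by
        rw [div_pow, div_mul_cancel₀]
        exact pow_ne_zero _ hn0
      have h2 : (α/(n:ℝ))^(r+1) * (n:ℝ)^r = (α/n) * α^r := by
        rw [div_pow]
        field_simp
        ring
      simp only [Nat.add_sub_cancel]
      push_cast
      linear_combination ((n.choose (r+1) : ℝ) * (1-α)^(n-(r+1))) * h1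
        - ((n.choose (r+1) : ℝ) * (1-α)^(n-(r+1)) * ((r:ℝ)+1)) * h2
  rw [Finset.sum_congr rfl hterm, Finset.sum_sub_distrib, ← Finset.mul_sum, bin1, bin2]
  have h3 : α + (1-α) = 1 := by ring
  rw [h3]
  field_simp
  simp

lemma card_filter_perm {n : ℕ} (σ : Equiv.Perm (Fin n)) (p : Fin n → Prop) [DecidablePred p] :
    (Finset.univ.filter (fun k => p (σ k))).card = (Finset.univ.filter p).card := by
  apply Finset.card_bij (fun k _ => σ k)
  · intro k hk
    simp only [mem_filter, mem_univ, true_and] at hk ⊢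
    exact hk
  · intro k _ k' _ h
    exact σ.injective h
  · intro b hb
    simp only [mem_filter, mem_univ, true_and] at hb
    exact ⟨σ.symm b, Finset.mem_filter.mpr ⟨mem_univ _, by simpa using hb⟩, by simp⟩

lemma ordStat_ge_iff_s6 {n : ℕ} (a : Fin n → ℝ) (x : Fin n → ℝ) :
    (∀ i, a i ≤ ordStat x i) ↔
      ∀ i : Fin n, (Finset.univ.filter (fun k => x k < a i)).card ≤ (i:ℕ) := by
  have hy : Monotone (ordStat x) := Tuple.monotone_sort x
  have hcount : ∀ t : ℝ, (Finset.univ.filter (fun k => x k < t)).card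
      = (Finset.univ.filter (fun k => ordStat x k < t)).card :=
    fun t => (card_filter_perm (Tuple.sort x) (fun k => x k < t)).symm
  refine forall_congr' (fun i => ?_)
  rw [hcount]
  constructor
  · intro h
    refine le_trans (Finset.card_le_card ?_) (le_of_eq (Fin.card_Iio i))
    intro k hk
    simp only [Finset.mem_filter, mem_univ, true_and] at hk
    rw [Finset.mem_Iio]
    by_contra hik
    exact absurd (lt_of_lt_of_le hk h) (not_lt.mpr (hy (not_lt.mp hik)))
  · intro h
    by_contra hlt
    push_neg at hlt
    have hsub : Finset.Iic i ⊆ Finset.univ.filter (fun k => ordStat x k < a i) := by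
      intro k hk
      rw [Finset.mem_Iic] at hk
      exact Finset.mem_filter.mpr ⟨mem_univ _, lt_of_le_of_lt (hy hk) hlt⟩
    have := Finset.card_le_card hsub
    rw [Fin.card_Iic] at this
    omega

noncomputable def cellOf {n : ℕ} (a : Fin n → ℝ) (x : ℝ) : Fin (n+1) :=
  ⟨(Finset.univ.filter (fun j : Fin n => a j ≤ x)).card,
    Nat.lt_succ_of_le (le_trans (Finset.card_filter_le _ _)
      (by rw [Finset.card_univ, Fintype.card_fin]))⟩

lemma cellOf_le_iff {n : ℕ} {a : Fin n → ℝ} (ha : Monotone a) (x : ℝ) (i : Fin n) :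
    (cellOf a x : ℕ) ≤ (i:ℕ) ↔ x < a i := by
  constructor
  · intro h
    by_contra hax
    push_neg at hax
    have hsub : Finset.Iic i ⊆ Finset.univ.filter (fun j => a j ≤ x) := by
      intro j hj
      rw [Finset.mem_Iic] at hj
      exact Finset.mem_filter.mpr ⟨mem_univ _, le_trans (ha hj) hax⟩
    have := Finset.card_le_card hsub
    rw [Fin.card_Iic] at this
    simp only [cellOf] at h
    omega
  · intro hx
    show (Finset.univ.filter (fun j : Fin n => a j ≤ x)).card ≤ (i:ℕ)
    refine le_trans (Finset.card_le_card ?_) (le_of_eq (Fin.card_Iio i))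
    intro j hj
    simp only [Finset.mem_filter, mem_univ, true_and] at hj
    rw [Finset.mem_Iio]
    by_contra hij
    exact absurd (le_trans (ha (not_lt.mp hij)) hj) (not_le.mpr hx)

lemma cellOf_le_set {n : ℕ} {a : Fin n → ℝ} (ha : Monotone a) (t : ℕ) (ht : t < n) :
    {x : ℝ | (cellOf a x : ℕ) ≤ t} = Set.Iio (a ⟨t, ht⟩) := by
  ext x
  simp only [Set.mem_setOf_eq, Set.mem_Iio]
  exact cellOf_le_iff ha x ⟨t, ht⟩

lemma cellOf_le_set_univ {n : ℕ} (a : Fin n → ℝ) (t : ℕ) (ht : n ≤ t) :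
    {x : ℝ | (cellOf a x : ℕ) ≤ t} = Set.univ := by
  ext x
  simp only [Set.mem_setOf_eq, Set.mem_univ, iff_true]
  exact le_trans (Nat.lt_succ_iff.mp (cellOf a x).isLt) ht

lemma cellOf_eq_split {n : ℕ} (a : Fin n → ℝ) (j : Fin (n+1)) :
    {x : ℝ | cellOf a x = j} = (if (j:ℕ) = 0 then {x : ℝ | (cellOf a x : ℕ) ≤ 0}
      else {x : ℝ | (cellOf a x : ℕ) ≤ (j:ℕ)} \ {x : ℝ | (cellOf a x : ℕ) ≤ (j:ℕ) - 1}) := by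
  by_cases hj : (j:ℕ) = 0
  · rw [if_pos hj]
    ext x
    simp only [Set.mem_setOf_eq, Fin.ext_iff, hj]
    omega
  · rw [if_neg hj]
    ext x
    simp only [Set.mem_setOf_eq, Set.mem_diff, Fin.ext_iff]
    omega

lemma measurable_cell {n : ℕ} {a : Fin n → ℝ} (ha : Monotone a) (j : Fin (n+1)) :
    MeasurableSet {x : ℝ | cellOf a x = j} := by
  have hle : ∀ t : ℕ, MeasurableSet {x : ℝ | (cellOf a x : ℕ) ≤ t} := by
    intro t
    rcases Nat.lt_or_ge t n with ht | ht
    · rw [cellOf_le_set ha t ht]; exact measurableSet_Iio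
    · rw [cellOf_le_set_univ a t ht]; exact MeasurableSet.univ
  rw [cellOf_eq_split]
  by_cases hj : (j:ℕ) = 0
  · rw [if_pos hj]; exact hle 0
  · rw [if_neg hj]; exact (hle _).diff (hle _)

lemma cell_measure {Ω : Type*} [MeasurableSpace Ω] {μ : Measure Ω} [IsProbabilityMeasure μ]
    {n : ℕ} (hn : 0 < n) {Y : Ω → ℝ} (hY : Measurable Y)
    {F : ℝ → ℝ} (hcdf : ∀ t, (μ {ω | Y ω ≤ t}).toReal = F t)
    (hatom : ∀ t, μ {ω | Y ω = t} = 0)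
    {a : Fin n → ℝ} (ha : Monotone a)
    {α : ℝ} (hα0 : 0 ≤ α) (hα1 : α ≤ 1)
    (hFa : ∀ j : Fin n, F (a j) = ((j:ℕ) + 1) * α / n)
    (j : Fin (n+1)) :
    μ (Y ⁻¹' {x | cellOf a x = j})
      = ENNReal.ofReal (if (j:ℕ) < n then α / n else 1 - α) := by
  have hn0 : (n:ℝ) ≠ 0 := Nat.cast_ne_zero.mpr (by omega)
  have hA : ∀ i : Fin n, μ {ω | Y ω < a i} = ENNReal.ofReal (((i:ℕ)+1) * α / n) := by
    intro i
    have h1 : μ {ω | Y ω ≤ a i} = ENNReal.ofReal (((i:ℕ)+1) * α / n) := by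
      rw [← hFa i, ← hcdf (a i), ENNReal.ofReal_toReal (measure_ne_top μ _)]
    have h2 : μ {ω | Y ω < a i} = μ {ω | Y ω ≤ a i} := by
      refine le_antisymm (measure_mono (fun ω (hω : Y ω < a i) => (le_of_lt hω : Y ω ≤ a i))) ?_
      calc μ {ω | Y ω ≤ a i} ≤ μ ({ω | Y ω < a i} ∪ {ω | Y ω = a i}) := by
            apply measure_mono
            intro ω hω
            simp only [Set.mem_setOf_eq] at hω
            rcases lt_or_eq_of_le hω with h | h
            · exact Or.inl h
            · exact Or.inr h
        _ ≤ μ {ω | Y ω < a i} + μ {ω | Y ω = a i} := measure_union_le _ _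
        _ = μ {ω | Y ω < a i} := by rw [hatom (a i), add_zero]
    rw [h2, h1]
  have hB : ∀ t : ℕ, t < n → μ (Y ⁻¹' {x | (cellOf a x : ℕ) ≤ t})
      = ENNReal.ofReal (((t:ℝ)+1) * α / n) := by
    intro t ht
    rw [cellOf_le_set ha t ht]
    exact hA ⟨t, ht⟩
  have hmle : ∀ t : ℕ, MeasurableSet (Y ⁻¹' {x | (cellOf a x : ℕ) ≤ t}) := by
    intro t
    apply hY
    rcases Nat.lt_or_ge t n with ht | ht
    · rw [cellOf_le_set ha t ht]; exact measurableSet_Iio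
    · rw [cellOf_le_set_univ a t ht]; exact MeasurableSet.univ
  rw [cellOf_eq_split]
  by_cases h0 : (j:ℕ) = 0
  · rw [if_pos h0, if_pos (by omega : (j:ℕ) < n)]
    have := hB 0 hn
    rw [this]
    norm_num
  · rw [if_neg h0]
    obtain ⟨r, hr⟩ := Nat.exists_eq_succ_of_ne_zero h0
    have hsub : {x : ℝ | (cellOf a x : ℕ) ≤ (j:ℕ) - 1} ⊆ {x : ℝ | (cellOf a x : ℕ) ≤ (j:ℕ)} :=
      fun x hx => le_trans hx (Nat.sub_le _ _)
    rw [Set.preimage_diff,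
      measure_diff (Set.preimage_mono hsub) (hmle _).nullMeasurableSet (measure_ne_top μ _)]
    rcases Nat.lt_or_ge (j:ℕ) n with hjn | hjn
    · rw [if_pos hjn, hB _ (by omega), hB ((j:ℕ)-1) (by omega)]
      rw [← ENNReal.ofReal_sub _ (by positivity)]
      congr 1
      rw [hr]
      push_cast [Nat.succ_sub_one]
      ring
    · have hjn' : (j:ℕ) = n := by omega
      rw [if_neg (by omega)]
      have huniv : {x : ℝ | (cellOf a x : ℕ) ≤ (j:ℕ)} = Set.univ :=
        cellOf_le_set_univ a _ (by omega)
      rw [huniv, Set.preimage_univ, measure_univ, hB ((j:ℕ)-1) (by omega)]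
      have hcast : (((j:ℕ) - 1 : ℕ) : ℝ) + 1 = (n:ℝ) := by
        rw [Nat.cast_sub (by omega : 1 ≤ (j:ℕ))]
        rw [hjn']
        ring
      rw [hcast]
      rw [show (n:ℝ) * α / n = α from by field_simp]
      rw [ENNReal.ofReal_sub _ hα0, ENNReal.ofReal_one]


lemma count_eq {n : ℕ} {a : Fin n → ℝ} (ha : Monotone a) (x : Fin n → ℝ) (i : Fin n) :
    (Finset.univ.filter (fun k => x k < a i)).card
      = lowCount (fun k => cellOf a (x k)) (i:ℕ) := by
  unfold lowCount
  congr 1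
  apply Finset.filter_congr
  intro k _
  simp only [eq_iff_iff]
  exact (cellOf_le_iff ha (x k) i).symm

/-- Equality case of the Simes inequality: if `X_1, ..., X_n` are independent with
common continuous (atomless) CDF `F`, `a_1 ≤ ⋯ ≤ a_n` and `F(a_j) = jα/n` for all `j`,
then `P(X_{1:n} ≥ a_1, ..., X_{n:n} ≥ a_n) = 1 − α`. -/
theorem simes_equality_independent
    {Ω : Type*} [MeasurableSpace Ω] {μ : Measure Ω} [IsProbabilityMeasure μ]
    {n : ℕ} (hn : 0 < n) (X : Fin n → Ω → ℝ)
    (hmeas : ∀ i, Measurable (X i))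
    (hindep : iIndepFun X μ)
    (F : ℝ → ℝ)
    (hcdf : ∀ i (t : ℝ), (μ {ω | X i ω ≤ t}).toReal = F t)
    (hatomless : ∀ i (t : ℝ), μ {ω | X i ω = t} = 0)
    (a : Fin n → ℝ) (ha : Monotone a)
    (α : ℝ) (hα : α ∈ Set.Icc (0 : ℝ) 1)
    (hFa : ∀ j : Fin n, F (a j) = ((j : ℕ) + 1) * α / n) :
    μ {ω | ∀ i : Fin n, a i ≤ ordStat (fun j => X j ω) i} = ENNReal.ofReal (1 - α) := by
  classical
  obtain ⟨hα0, hα1⟩ := hα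
  -- event rewrite
  have hmemPF : ∀ ω : Ω, ((∀ i : Fin n, a i ≤ ordStat (fun j => X j ω) i)
      ↔ (fun k => cellOf a (X k ω)) ∈ PF n n) := by
    intro ω
    rw [ordStat_ge_iff_s6 a (fun j => X j ω)]
    simp only [PF, Finset.mem_filter, Finset.mem_univ, true_and]
    constructor
    · intro h j hj
      have := h ⟨j, hj⟩
      rwa [count_eq ha] at this
    · intro h i
      rw [count_eq ha]
      exact h (i:ℕ) i.isLt
  have hev : {ω | ∀ i : Fin n, a i ≤ ordStat (fun j => X j ω) i}
      = ⋃ c ∈ PF n n, ⋂ k, X k ⁻¹' {x | cellOf a x = c k} := by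
    ext ω
    simp only [Set.mem_setOf_eq, Set.mem_iUnion, Set.mem_iInter, Set.mem_preimage,
      exists_prop]
    rw [hmemPF ω]
    constructor
    · intro h
      exact ⟨fun k => cellOf a (X k ω), h, fun k => rfl⟩
    · rintro ⟨c, hc, hck⟩
      have : (fun k => cellOf a (X k ω)) = c := funext (fun k => hck k)
      rwa [this]
  rw [hev]
  -- disjointness and measurability
  have hmeasSet : ∀ c : Fin n → Fin (n+1), MeasurableSet (⋂ k, X k ⁻¹' {x | cellOf a x = c k}) :=
    fun c => MeasurableSet.iInter (fun k => hmeas k (measurable_cell ha (c k)))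
  have hdisj : (↑(PF n n) : Set (Fin n → Fin (n+1))).PairwiseDisjoint
      (fun c => ⋂ k, X k ⁻¹' {x | cellOf a x = c k}) := by
    intro c _ c' _ hne
    rw [Function.onFun, Set.disjoint_left]
    intro ω hω hω'
    apply hne
    funext k
    have h1 := Set.mem_iInter.mp hω k
    have h2 := Set.mem_iInter.mp hω' k
    simp only [Set.mem_preimage, Set.mem_setOf_eq] at h1 h2
    rw [← h1, ← h2]
  rw [measure_biUnion_finset hdisj (fun c _ => hmeasSet c)]
  -- independence: product formula
  have hprod : ∀ c : Fin n → Fin (n+1),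
      μ (⋂ k, X k ⁻¹' {x | cellOf a x = c k})
        = ∏ k, μ (X k ⁻¹' {x | cellOf a x = c k}) := by
    intro c
    have h := (iIndepFun_iff_measure_inter_preimage_eq_mul.mp hindep) Finset.univ
      (sets := fun k => {x | cellOf a x = c k}) (fun i _ => measurable_cell ha (c i))
    rw [← h]
    congr 1
    simp
  have hfactor : ∀ (k : Fin n) (j : Fin (n+1)), μ (X k ⁻¹' {x | cellOf a x = j})
      = ENNReal.ofReal (if j = Fin.last n then 1 - α else α / n) := by
    intro k j
    rw [cell_measure hn (hmeas k) (hcdf k) (hatomless k) ha hα0 hα1 hFa j]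
    congr 1
    by_cases hj : j = Fin.last n
    · rw [if_pos hj, if_neg (by rw [hj]; simp [Fin.val_last])]
    · rw [if_neg hj, if_pos (Fin.val_lt_last hj)]
  have hnn : ∀ j : Fin (n+1), 0 ≤ (if j = Fin.last n then 1 - α else α / n) := by
    intro j
    by_cases hj : j = Fin.last n
    · rw [if_pos hj]; linarith
    · rw [if_neg hj]; positivity
  calc ∑ c ∈ PF n n, μ (⋂ k, X k ⁻¹' {x | cellOf a x = c k})
      = ∑ c ∈ PF n n, ENNReal.ofReal (∏ k, (if c k = Fin.last n then 1 - α else α / n)) := by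
        refine Finset.sum_congr rfl (fun c _ => ?_)
        rw [hprod c]
        rw [ENNReal.ofReal_prod_of_nonneg (fun k _ => hnn (c k))]
        exact Finset.prod_congr rfl (fun k _ => hfactor k (c k))
    _ = ENNReal.ofReal (∑ c ∈ PF n n, ∏ k, (if c k = Fin.last n then 1 - α else α / n)) := by
        rw [ENNReal.ofReal_sum_of_nonneg
          (fun c _ => Finset.prod_nonneg (fun k _ => hnn (c k)))]
    _ = ENNReal.ofReal (1 - α) := by
        rw [comb_main n hn α hα0 hα1]
end

section
/- Let X_1, ..., X_n be exchangeable real random variables (jointly distributed with a distribution invariant under permutations) with atomless marginals, let a_k ≤ ... ≤ a_n be reals for a fixed 1 ≤ k ≤ n, and let R_n = max{i : X_{i:n} ≤ a_i} with R_n = 0 if empty (here a_1, ..., a_{k-1} may be taken as −∞, so R_n ≥ k iff X_{j:n} ≤ a_j for some j ≥ k). Then P(R_n ≥ k) ≤ Σ_{r=k}^{n} C(r,k)^{-1} Σ_{1 ≤ i_1 < ... < i_k ≤ n} P(max_j X_{i_j} ≤ a_r, R_n = r), with equality; i.e., I(R_n ≥ k) = Σ_{r=k}^n C(r,k)^{-1}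 Σ_{subsets} I(max_j X_{i_j} ≤ a_r, R_n = r) almost surely. -/
open MeasureTheory

/-- `simesRank x a` is `R = max {i : x_{i:n} ≤ a_i}` in one-based indexing
(`0` if the set is empty). -/
noncomputable def simesRank {n : ℕ} (x a : Fin n → ℝ) : ℕ :=
  (Finset.univ.filter (fun i : Fin n => ordStat x i ≤ a i)).sup (fun i => (i : ℕ) + 1)

lemma simesRank_card {n : ℕ} (x a : Fin n → ℝ) (ha : Monotone a) (r : Fin n)
    (h : simesRank x a = (r : ℕ) + 1) :
    (Finset.univ.filter (fun i : Fin n => x i ≤ a r)).card = (r : ℕ) + 1 := by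
  set T := Finset.univ.filter (fun i : Fin n => ordStat x i ≤ a i) with hT
  have hne : T.Nonempty := by
    by_contra hc
    rw [Finset.not_nonempty_iff_eq_empty] at hc
    simp [simesRank, ← hT, hc] at h
  obtain ⟨i, hiT, hisup⟩ := Finset.exists_mem_eq_sup T hne (fun i => (i : ℕ) + 1)
  have hir : i = r := by
    have : (i : ℕ) + 1 = (r : ℕ) + 1 := by rw [← hisup, ← h]; rfl
    exact Fin.ext (by omega)
  subst hir
  have hile : ordStat x i ≤ a i := (Finset.mem_filter.mp hiT).2
  -- membership characterization
  have hmem : ∀ j : Fin n, ordStat x j ≤ a i ↔ j ≤ i := by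
    intro j
    constructor
    · intro hj
      by_contra hji
      push_neg at hji
      have hj2 : ordStat x j ≤ a j := hj.trans (ha hji.le)
      have : (j : ℕ) + 1 ≤ simesRank x a :=
        Finset.le_sup (f := fun i : Fin n => (i : ℕ) + 1)
          (Finset.mem_filter.mpr ⟨Finset.mem_univ j, hj2⟩)
      rw [h] at this
      exact absurd (Fin.lt_iff_val_lt_val.mp hji) (by omega)
    · intro hj
      exact (Tuple.monotone_sort x hj).trans hile
  have hcard2 : (Finset.univ.filter (fun j : Fin n => ordStat x j ≤ a i)).card
      = (i : ℕ) + 1 := by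
    have : (Finset.univ.filter (fun j : Fin n => ordStat x j ≤ a i)) = Finset.Iic i := by
      ext j; simp [hmem j]
    rw [this, Fin.card_Iic]
  -- reindex by the sorting permutation
  have hbij : (Finset.univ.filter (fun i' : Fin n => x i' ≤ a i)).card
      = (Finset.univ.filter (fun j : Fin n => ordStat x j ≤ a i)).card := by
    apply Finset.card_bij' (fun j _ => (Tuple.sort x).symm j) (fun j _ => Tuple.sort x j)
    · intro j hj
      simp only [Finset.mem_filter, Finset.mem_univ, true_and] at hj ⊢
      simpa [ordStat] using hj
    · intro j hj
      simp only [Finset.mem_filter, Finset.mem_univ, true_and] at hj ⊢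
      simpa [ordStat] using hj
    · intro j _; simp
    · intro j _; simp
  rw [hbij, hcard2]

lemma simesRank_le {n : ℕ} (x a : Fin n → ℝ) : simesRank x a ≤ n :=
  Finset.sup_le fun i _ => i.isLt

/-- Identity (2.7) in Sarkar's Lemma 2.1: almost surely,
`1{R_n ≥ k} = Σ_{r} C(r,k)⁻¹ Σ_{|s|=k} 1{max_{i ∈ s} X_i ≤ a_r, R_n = r}`,
where `r` runs over one-based ranks (terms with `r < k` vanish) and the inner
sum is over all `k`-subsets of `{1, …, n}`. -/
theorem simes_indicator_decomposition
    {Ω : Type*} [MeasurableSpace Ω] {μ : Measure Ω} [IsProbabilityMeasure μ]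
    {n : ℕ} (X : Fin n → Ω → ℝ) (hmeas : ∀ i, Measurable (X i))
    (hexch : ∀ σ : Equiv.Perm (Fin n),
      Measure.map (fun ω => fun i => X (σ i) ω) μ
        = Measure.map (fun ω => fun i => X i ω) μ)
    (hatomless : ∀ i (t : ℝ), μ {ω | X i ω = t} = 0)
    (a : Fin n → ℝ) (ha : Monotone a)
    (k : ℕ) (hk : 1 ≤ k) (hkn : k ≤ n) :
    ∀ᵐ ω ∂μ,
      (if k ≤ simesRank (fun j => X j ω) a then (1 : ℝ) else 0)
        = ∑ r : Fin n, (((r : ℕ) + 1).choose k : ℝ)⁻¹ *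
            ∑ s ∈ (Finset.univ : Finset (Fin n)).powersetCard k,
              (if (∀ i ∈ s, X i ω ≤ a r) ∧
                  simesRank (fun j => X j ω) a = (r : ℕ) + 1 then (1 : ℝ) else 0) := by
  refine Filter.Eventually.of_forall fun ω => ?_
  set x : Fin n → ℝ := fun j => X j ω with hx
  rcases hR : simesRank x a with _ | m
  · rw [if_neg (by omega)]
    symm
    refine Finset.sum_eq_zero fun r _ => ?_
    rw [Finset.sum_eq_zero, mul_zero]
    intro s _
    rw [if_neg]
    rintro ⟨-, h2⟩
    omega
  · have hm : m < n := by have := simesRank_le x a; omega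
    set r0 : Fin n := ⟨m, hm⟩ with hr0
    have hR' : simesRank x a = (r0 : ℕ) + 1 := hR
    rw [Finset.sum_eq_single r0 (fun r _ hr => ?_) (fun h => absurd (Finset.mem_univ r0) h)]
    · -- main term
      have hT := simesRank_card x a ha r0 hR'
      have hinner : (∑ s ∈ (Finset.univ : Finset (Fin n)).powersetCard k,
                (if (∀ i ∈ s, X i ω ≤ a r0) ∧ m + 1 = (r0 : ℕ) + 1 then (1 : ℝ) else 0))
          = ((m + 1).choose k : ℝ) := by
        have hc : ∀ s ∈ (Finset.univ : Finset (Fin n)).powersetCard k,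
            (if (∀ i ∈ s, X i ω ≤ a r0) ∧ m + 1 = (r0 : ℕ) + 1 then (1 : ℝ) else 0)
            = (if (∀ i ∈ s, x i ≤ a r0) then (1 : ℝ) else 0) := by
          intro s _
          by_cases hs : ∀ i ∈ s, x i ≤ a r0
          · rw [if_pos ⟨hs, rfl⟩, if_pos hs]
          · rw [if_neg (fun h => hs h.1), if_neg hs]
        rw [Finset.sum_congr rfl hc, Finset.sum_boole]
        have heq : ((Finset.univ : Finset (Fin n)).powersetCard k).filter
              (fun s => ∀ i ∈ s, x i ≤ a r0)
            = (Finset.univ.filter (fun i : Fin n => x i ≤ a r0)).powersetCard k := by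
          ext s
          simp only [Finset.mem_filter, Finset.mem_powersetCard, Finset.subset_univ,
            true_and, Finset.subset_iff]
          aesop
        rw [heq, Finset.card_powersetCard, hT]
      rw [hinner]
      by_cases hkm : k ≤ m + 1
      · rw [if_pos hkm, inv_mul_cancel₀]
        exact_mod_cast (Nat.choose_pos hkm).ne'
      · rw [if_neg hkm, Nat.choose_eq_zero_of_lt (by omega)]
        simp
    · -- other terms vanish
      rw [Finset.sum_eq_zero, mul_zero]
      intro s _
      rw [if_neg]
      rintro ⟨-, h2⟩
      exact hr (Fin.ext (by omega))
end

section
/- Let (X_1, ..., X_n) have a joint density f on ℝ^n that is MTP_2 and symmetric (permutation-invariant), and let Y = max{X_1, ..., X_k} for 1 ≤ k < n. Then the joint density of (Y, X_{k+1}, ..., X_n), given by g(y, x_{k+1}, ..., x_n) = k ∫...∫ f(y, x_2, ..., x_k, x_{k+1}, ..., x_n) Π_{i=2}^k 1{x_i ≤ y} dx_2 ... dx_k, is MTP_2. -/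
open MeasureTheory

/-- A nonnegative function on `ℝⁿ` is MTP₂ if `h(x ⊔ y) h(x ⊓ y) ≥ h(x) h(y)`
componentwise. -/
def IsMTP2 {n : ℕ} (h : (Fin n → ℝ) → ℝ) : Prop :=
  (∀ x, 0 ≤ h x) ∧ ∀ x y : Fin n → ℝ, h x * h y ≤ h (x ⊔ y) * h (x ⊓ y)

lemma ennreal_add_le {x y c d : ENNReal} (hx : x ≤ c) (hy : y ≤ c)
    (hxy : x * y ≤ c * d) : x + y ≤ c + d := by
  rcases eq_or_ne c ⊤ with rfl | hc
  · simp
  rcases eq_or_ne c 0 with rfl | hc0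
  · simp only [le_zero_iff] at hx hy
    simp [hx, hy]
  rcases eq_or_ne d ⊤ with rfl | hd
  · simp
  have hx' : x ≠ ⊤ := (hx.trans_lt hc.lt_top).ne
  have hy' : y ≠ ⊤ := (hy.trans_lt hc.lt_top).ne
  rw [← ENNReal.ofReal_toReal hx', ← ENNReal.ofReal_toReal hy',
    ← ENNReal.ofReal_toReal hc, ← ENNReal.ofReal_toReal hd,
    ← ENNReal.ofReal_add ENNReal.toReal_nonneg ENNReal.toReal_nonneg,
    ← ENNReal.ofReal_add ENNReal.toReal_nonneg ENNReal.toReal_nonneg]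
  apply ENNReal.ofReal_le_ofReal
  have h1 : x.toReal ≤ c.toReal := ENNReal.toReal_le_toReal hx' hc |>.mpr hx
  have h2 : y.toReal ≤ c.toReal := ENNReal.toReal_le_toReal hy' hc |>.mpr hy
  have h3 : x.toReal * y.toReal ≤ c.toReal * d.toReal := by
    rw [← ENNReal.toReal_mul, ← ENNReal.toReal_mul]
    exact ENNReal.toReal_le_toReal (by simp [ENNReal.mul_ne_top, hx', hy'])
      (by simp [ENNReal.mul_ne_top, hc, hd]) |>.mpr hxy
  have hcpos : 0 < c.toReal := ENNReal.toReal_pos hc0 hc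
  nlinarith [mul_nonneg (sub_nonneg.2 h1) (sub_nonneg.2 h2),
    ENNReal.toReal_nonneg (a := x), ENNReal.toReal_nonneg (a := y),
    ENNReal.toReal_nonneg (a := d)]

lemma step1 (H K M N : ℝ → ENNReal) (hH : Measurable H) (hK : Measurable K)
    (hM : Measurable M) (hN : Measurable N)
    (hpt : ∀ t s : ℝ, H t * K s ≤ M (t ⊔ s) * N (t ⊓ s)) :
    (∫⁻ t, H t) * (∫⁻ t, K t) ≤ (∫⁻ t, M t) * (∫⁻ t, N t) := by
  have key : ∀ t s : ℝ, H t * K s + H s * K t ≤ M t * N s + M s * N t := by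
    intro t s
    rcases le_total t s with h | h
    · have h1 : H t * K s ≤ M s * N t := by
        simpa [sup_eq_right.2 h, inf_eq_left.2 h] using hpt t s
      have h2 : H s * K t ≤ M s * N t := by
        simpa [sup_eq_left.2 h, inf_eq_right.2 h] using hpt s t
      have h3 : (H t * K s) * (H s * K t) ≤ (M s * N t) * (M t * N s) := by
        calc (H t * K s) * (H s * K t) = (H t * K t) * (H s * K s) := by ring
          _ ≤ (M t * N t) * (M s * N s) := by
              exact mul_le_mul' (by simpa using hpt t t) (by simpa using hpt s s)
          _ = (M s * N t) * (M t * N s) := by ring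
      calc H t * K s + H s * K t ≤ (M s * N t) + (M t * N s) := ennreal_add_le h1 h2 h3
        _ = M t * N s + M s * N t := by ring
    · have h1 : H t * K s ≤ M t * N s := by
        simpa [sup_eq_left.2 h, inf_eq_right.2 h] using hpt t s
      have h2 : H s * K t ≤ M t * N s := by
        simpa [sup_eq_right.2 h, inf_eq_left.2 h] using hpt s t
      have h3 : (H t * K s) * (H s * K t) ≤ (M t * N s) * (M s * N t) := by
        calc (H t * K s) * (H s * K t) = (H t * K t) * (H s * K s) := by ring
          _ ≤ (M t * N t) * (M s * N s) := by
              exact mul_le_mul' (by simpa using hpt t t) (by simpa using hpt s s)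
          _ = (M t * N s) * (M s * N t) := by ring
      exact ennreal_add_le h1 h2 h3
  have main : (∫⁻ t, ∫⁻ s, (H t * K s + H s * K t)) ≤
      (∫⁻ t, ∫⁻ s, (M t * N s + M s * N t)) :=
    lintegral_mono fun t => lintegral_mono fun s => key t s
  have eval : ∀ (A B : ℝ → ENNReal), Measurable A → Measurable B →
      (∫⁻ t, ∫⁻ s, (A t * B s + A s * B t)) = 2 * ((∫⁻ t, A t) * (∫⁻ t, B t)) := by
    intro A B hA hB
    have : ∀ t : ℝ, (∫⁻ s, (A t * B s + A s * B t)) =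
        A t * (∫⁻ s, B s) + (∫⁻ s, A s) * B t := by
      intro t
      rw [lintegral_add_left (hB.const_mul _), lintegral_const_mul _ hB,
        lintegral_mul_const _ hA]
    simp_rw [this]
    rw [lintegral_add_left (hA.mul_const _), lintegral_mul_const _ hA,
      lintegral_const_mul _ hB]
    ring
  rw [eval H K hH hK, eval M N hM hN] at main
  exact (ENNReal.mul_le_mul_iff_right (by norm_num) (by norm_num)).mp main

lemma cons_sup {n : ℕ} (t s : ℝ) (w v : Fin n → ℝ) :
    (Fin.cons t w ⊔ Fin.cons s v : Fin (n+1) → ℝ) = Fin.cons (t ⊔ s) (w ⊔ v) := by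
  funext j
  refine Fin.cases ?_ ?_ j <;> simp [Pi.sup_apply]

lemma cons_inf {n : ℕ} (t s : ℝ) (w v : Fin n → ℝ) :
    (Fin.cons t w ⊓ Fin.cons s v : Fin (n+1) → ℝ) = Fin.cons (t ⊓ s) (w ⊓ v) := by
  funext j
  refine Fin.cases ?_ ?_ j <;> simp [Pi.inf_apply]

lemma measurable_cons_pair {n : ℕ} :
    Measurable (fun q : ℝ × (Fin n → ℝ) => (Fin.cons q.1 q.2 : Fin (n+1) → ℝ)) := by
  apply measurable_pi_iff.2
  intro j
  refine Fin.cases ?_ ?_ j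
  · simpa using measurable_fst
  · intro i
    simpa [Function.comp_def] using (measurable_pi_apply i).comp measurable_snd

lemma lintegral_pi_succ {n : ℕ} (A : (Fin (n+1) → ℝ) → ENNReal) (hA : Measurable A) :
    (∫⁻ x, A x) = ∫⁻ t : ℝ, ∫⁻ w : Fin n → ℝ, A (Fin.cons t w) := by
  have mp := measurePreserving_piFinSuccAbove (fun _ : Fin (n+1) => (volume : Measure ℝ)) 0
  set e := MeasurableEquiv.piFinSuccAbove (fun _ : Fin (n+1) => ℝ) 0 with he
  have h1 : (∫⁻ x, A x) = ∫⁻ x, (A ∘ e.symm) (e x) := by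
    congr 1; funext x; simp
  rw [volume_pi] at h1 ⊢
  rw [h1, mp.lintegral_comp (hA.comp e.symm.measurable)]
  rw [lintegral_prod _ ((hA.comp e.symm.measurable).aemeasurable)]
  refine lintegral_congr fun t => lintegral_congr fun w => ?_
  show A (e.symm (t, w)) = A (Fin.cons t w)
  congr 1
  simp only [he, MeasurableEquiv.piFinSuccAbove, MeasurableEquiv.symm_mk,
    MeasurableEquiv.coe_mk, Equiv.symm_symm, Fin.insertNthEquiv_apply]
  exact Fin.insertNth_zero' t w

lemma keyN : ∀ (p : ℕ) (F G H K : (Fin p → ℝ) → ENNReal), Measurable F → Measurable G →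
    Measurable H → Measurable K →
    (∀ w v, F w * G v ≤ H (w ⊔ v) * K (w ⊓ v)) →
    (∫⁻ w, F w) * (∫⁻ w, G w) ≤ (∫⁻ w, H w) * (∫⁻ w, K w) := by
  intro p
  induction p with
  | zero =>
    intro F G H K _ _ _ _ hpt
    have hs : ∀ (A : (Fin 0 → ℝ) → ENNReal), (∫⁻ w, A w) = A default := by
      intro A
      have : A = fun _ => A default := by
        funext w; congr 1; exact Subsingleton.elim _ _
      rw [this, lintegral_const, volume_pi]
      simp
    rw [hs, hs, hs, hs]
    simpa using hpt default default
  | succ n ih =>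
    intro F G H K hF hG hH hK hpt
    have slice : ∀ (A : (Fin (n+1) → ℝ) → ENNReal), Measurable A → ∀ t : ℝ,
        Measurable (fun w : Fin n → ℝ => A (Fin.cons t w)) := by
      intro A hA t
      exact hA.comp (measurable_cons_pair.comp ((measurable_const.prodMk measurable_id : Measurable fun w : Fin n → ℝ => (t, w))))
    have hmeas : ∀ (A : (Fin (n+1) → ℝ) → ENNReal), Measurable A →
        Measurable (fun t : ℝ => ∫⁻ w : Fin n → ℝ, A (Fin.cons t w)) := by
      intro A hA
      exact Measurable.lintegral_prod_right (hA.comp measurable_cons_pair)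
    have hpt1 : ∀ t s : ℝ,
        (∫⁻ w, F (Fin.cons t w)) * (∫⁻ v, G (Fin.cons s v)) ≤
        (∫⁻ w, H (Fin.cons (t ⊔ s) w)) * (∫⁻ w, K (Fin.cons (t ⊓ s) w)) := by
      intro t s
      refine ih _ _ _ _ (slice F hF t) (slice G hG s) (slice H hH _) (slice K hK _) ?_
      intro w v
      have := hpt (Fin.cons t w) (Fin.cons s v)
      rwa [cons_sup, cons_inf] at this
    have := step1 _ _ _ _ (hmeas F hF) (hmeas G hG) (hmeas H hH) (hmeas K hK) hpt1
    rw [lintegral_pi_succ F hF, lintegral_pi_succ G hG, lintegral_pi_succ H hH,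
      lintegral_pi_succ K hK]
    exact this

lemma append_sup {p m : ℕ} (a b : Fin p → ℝ) (c d : Fin m → ℝ) :
    (Fin.append a c ⊔ Fin.append b d) = Fin.append (a ⊔ b) (c ⊔ d) := by
  funext j
  refine Fin.addCases (fun i => ?_) (fun i => ?_) j <;>
    simp [Pi.sup_apply, Fin.append_left, Fin.append_right]

lemma append_inf {p m : ℕ} (a b : Fin p → ℝ) (c d : Fin m → ℝ) :
    (Fin.append a c ⊓ Fin.append b d) = Fin.append (a ⊓ b) (c ⊓ d) := by
  funext j
  refine Fin.addCases (fun i => ?_) (fun i => ?_) j <;>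
    simp [Pi.inf_apply, Fin.append_left, Fin.append_right]

lemma measurable_embed {p m : ℕ} (y : ℝ) (x : Fin m → ℝ) :
    Measurable (fun w : Fin p → ℝ => Fin.append (Fin.cons y w) x) := by
  apply measurable_pi_iff.2
  intro j
  refine Fin.addCases (fun i => ?_) (fun i => ?_) j
  · simp only [Fin.append_left]
    refine Fin.cases ?_ ?_ i
    · simpa using measurable_const
    · intro i'
      simpa using measurable_pi_apply i'
  · simp only [Fin.append_right]
    exact measurable_const

/-- Lemma 2.2: if `(X_1, ..., X_n)` has a symmetric MTP₂ joint density `f` (here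
`n = (p+1) + m` with `k = p + 1 ≥ 1` and `m = n - k ≥ 1`), then the joint density
`g(y, x_{k+1}, ..., x_n) = k ∫ f(y, x_2, ..., x_k, x_{k+1}, ..., x_n) Π_{i=2}^k 1{x_i ≤ y} dx_2 ⋯ dx_k`
of `(max{X_1, ..., X_k}, X_{k+1}, ..., X_n)` is MTP₂. -/
theorem max_marginal_density_isMTP2
    {p m : ℕ} (hm : 0 < m)
    (f : (Fin (p + 1 + m) → ℝ) → ℝ)
    (hf : IsMTP2 f)
    (hsymm : ∀ (σ : Equiv.Perm (Fin (p + 1 + m))) (x : Fin (p + 1 + m) → ℝ),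
      f (x ∘ σ) = f x)
    (hfmeas : Measurable f)
    (hInt : ∀ (y : ℝ) (x : Fin m → ℝ),
      Integrable (fun w : Fin p → ℝ =>
        (if ∀ i, w i ≤ y then (1 : ℝ) else 0) * f (Fin.append (Fin.cons y w) x)))
    (g : ℝ → (Fin m → ℝ) → ℝ)
    (hg : ∀ (y : ℝ) (x : Fin m → ℝ),
      g y x = (p + 1 : ℝ) * ∫ w : Fin p → ℝ,
        (if ∀ i, w i ≤ y then (1 : ℝ) else 0) * f (Fin.append (Fin.cons y w) x)) :
    (∀ y x, 0 ≤ g y x) ∧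
      ∀ (y₁ y₂ : ℝ) (x₁ x₂ : Fin m → ℝ),
        g y₁ x₁ * g y₂ x₂ ≤ g (y₁ ⊔ y₂) (x₁ ⊔ x₂) * g (y₁ ⊓ y₂) (x₁ ⊓ x₂) := by
  set φ : ℝ → (Fin m → ℝ) → (Fin p → ℝ) → ℝ := fun y x w =>
    (if ∀ i, w i ≤ y then (1 : ℝ) else 0) * f (Fin.append (Fin.cons y w) x) with hφ
  have hφnn : ∀ y x w, 0 ≤ φ y x w := by
    intro y x w
    exact mul_nonneg (by split <;> norm_num) (hf.1 _)
  have hφmeas : ∀ y x, Measurable (φ y x) := by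
    intro y x
    apply Measurable.mul
    · have hs : MeasurableSet {w : Fin p → ℝ | ∀ i, w i ≤ y} := by
        have : {w : Fin p → ℝ | ∀ i, w i ≤ y} = ⋂ i, {w | w i ≤ y} := by
          ext w; simp
        rw [this]
        exact MeasurableSet.iInter fun i =>
          measurableSet_le (measurable_pi_apply i) measurable_const
      exact Measurable.ite hs measurable_const measurable_const
    · exact hfmeas.comp (measurable_embed y x)
  have hI : ∀ y x, ∫ w, φ y x w = (∫⁻ w, ENNReal.ofReal (φ y x w)).toReal := by
    intro y x
    exact integral_eq_lintegral_of_nonneg_ae (ae_of_all _ (hφnn y x))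
      (hInt y x).aestronglyMeasurable
  have hfin : ∀ y x, (∫⁻ w, ENNReal.ofReal (φ y x w)) ≠ ⊤ := by
    intro y x
    have h1 : (∫⁻ w, ENNReal.ofReal (φ y x w)) ≤ ∫⁻ w, (‖φ y x w‖₊ : ENNReal) :=
      lintegral_mono fun w => Real.ofReal_le_enorm _
    exact (h1.trans_lt (hInt y x).hasFiniteIntegral).ne
  constructor
  · intro y x
    rw [hg]
    exact mul_nonneg (by positivity) (integral_nonneg (hφnn y x))
  · intro y₁ y₂ x₁ x₂
    have hpt : ∀ w v : Fin p → ℝ,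
        ENNReal.ofReal (φ y₁ x₁ w) * ENNReal.ofReal (φ y₂ x₂ v) ≤
        ENNReal.ofReal (φ (y₁ ⊔ y₂) (x₁ ⊔ x₂) (w ⊔ v)) *
          ENNReal.ofReal (φ (y₁ ⊓ y₂) (x₁ ⊓ x₂) (w ⊓ v)) := by
      intro w v
      rw [← ENNReal.ofReal_mul (hφnn _ _ _), ← ENNReal.ofReal_mul (hφnn _ _ _)]
      apply ENNReal.ofReal_le_ofReal
      by_cases h1 : ∀ i, w i ≤ y₁
      · by_cases h2 : ∀ i, v i ≤ y₂
        · have hsup : ∀ i, (w ⊔ v) i ≤ y₁ ⊔ y₂ := fun i => sup_le_sup (h1 i) (h2 i)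
          have hinf : ∀ i, (w ⊓ v) i ≤ y₁ ⊓ y₂ := fun i => inf_le_inf (h1 i) (h2 i)
          simp only [hφ, if_pos h1, if_pos h2, if_pos hsup, if_pos hinf, one_mul]
          have h := hf.2 (Fin.append (Fin.cons y₁ w) x₁) (Fin.append (Fin.cons y₂ v) x₂)
          rwa [append_sup, append_inf, cons_sup, cons_inf] at h
        · have : φ y₂ x₂ v = 0 := by simp [hφ, if_neg h2]
          rw [this, mul_zero]
          exact mul_nonneg (hφnn _ _ _) (hφnn _ _ _)
      · have : φ y₁ x₁ w = 0 := by simp [hφ, if_neg h1]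
        rw [this, zero_mul]
        exact mul_nonneg (hφnn _ _ _) (hφnn _ _ _)
    have hle := keyN p (fun w => ENNReal.ofReal (φ y₁ x₁ w))
      (fun w => ENNReal.ofReal (φ y₂ x₂ w))
      (fun w => ENNReal.ofReal (φ (y₁ ⊔ y₂) (x₁ ⊔ x₂) w))
      (fun w => ENNReal.ofReal (φ (y₁ ⊓ y₂) (x₁ ⊓ x₂) w))
      (hφmeas _ _).ennreal_ofReal (hφmeas _ _).ennreal_ofReal
      (hφmeas _ _).ennreal_ofReal (hφmeas _ _).ennreal_ofReal hpt
    have htr : ((∫⁻ w, ENNReal.ofReal (φ y₁ x₁ w)) *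
        (∫⁻ w, ENNReal.ofReal (φ y₂ x₂ w))).toReal ≤
        ((∫⁻ w, ENNReal.ofReal (φ (y₁ ⊔ y₂) (x₁ ⊔ x₂) w)) *
        (∫⁻ w, ENNReal.ofReal (φ (y₁ ⊓ y₂) (x₁ ⊓ x₂) w))).toReal :=
      ENNReal.toReal_mono (ENNReal.mul_ne_top (hfin _ _) (hfin _ _)) hle
    rw [ENNReal.toReal_mul, ENNReal.toReal_mul] at htr
    rw [hg, hg, hg, hg]
    rw [show (∫ w : Fin p → ℝ, (if ∀ i, w i ≤ y₁ then (1:ℝ) else 0) *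
        f (Fin.append (Fin.cons y₁ w) x₁)) = ∫ w, φ y₁ x₁ w from rfl,
      show (∫ w : Fin p → ℝ, (if ∀ i, w i ≤ y₂ then (1:ℝ) else 0) *
        f (Fin.append (Fin.cons y₂ w) x₂)) = ∫ w, φ y₂ x₂ w from rfl,
      show (∫ w : Fin p → ℝ, (if ∀ i, w i ≤ y₁ ⊔ y₂ then (1:ℝ) else 0) *
        f (Fin.append (Fin.cons (y₁ ⊔ y₂) w) (x₁ ⊔ x₂))) = ∫ w, φ (y₁ ⊔ y₂) (x₁ ⊔ x₂) w from rfl,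
      show (∫ w : Fin p → ℝ, (if ∀ i, w i ≤ y₁ ⊓ y₂ then (1:ℝ) else 0) *
        f (Fin.append (Fin.cons (y₁ ⊓ y₂) w) (x₁ ⊓ x₂))) = ∫ w, φ (y₁ ⊓ y₂) (x₁ ⊓ x₂) w from rfl,
      hI, hI, hI, hI]
    have hk : (0:ℝ) ≤ (p + 1 : ℝ) := by positivity
    nlinarith [htr, ENNReal.toReal_nonneg (a := ∫⁻ w, ENNReal.ofReal (φ y₁ x₁ w)),
      ENNReal.toReal_nonneg (a := ∫⁻ w, ENNReal.ofReal (φ y₂ x₂ w)),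
      sq_nonneg ((p:ℝ)+1)]
end

section
/- Let (X, Y) be jointly distributed real random variables such that E[φ(Y) | X = x] is nondecreasing in x for every bounded nondecreasing φ (i.e., X and Y are positively regression dependent). Then for any nondecreasing (upper) set A ⊆ ℝ in Y and any reals a ≤ b with P(X ≤ a) > 0: P(Y ∈ A | X ≤ a) ≤ P(Y ∈ A | X ≤ b). -/
open MeasureTheory

/-- If `(X, Y)` is positively regression dependent — i.e. for every bounded
nondecreasing `φ` the conditional expectation `E[φ(Y) | X]` is a nondecreasing
function of `X` — then for every upper set `A` and `a ≤ b` with `P(X ≤ a) > 0`,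
`P(Y ∈ A | X ≤ a) ≤ P(Y ∈ A | X ≤ b)`. -/
theorem prd_implies_monotone_halfline_condprob
    {Ω : Type*} [MeasurableSpace Ω] {μ : Measure Ω} [IsProbabilityMeasure μ]
    (X Y : Ω → ℝ) (hX : Measurable X) (hY : Measurable Y)
    (hPRD : ∀ φ : ℝ → ℝ, Monotone φ → (∃ M, ∀ t, |φ t| ≤ M) →
      ∃ g : ℝ → ℝ, Monotone g ∧
        μ[(fun ω => φ (Y ω)) | MeasurableSpace.comap X (inferInstance : MeasurableSpace ℝ)]
          =ᵐ[μ] fun ω => g (X ω))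
    (A : Set ℝ) (hA : IsUpperSet A) (hAmeas : MeasurableSet A)
    (a b : ℝ) (hab : a ≤ b) (hPa : 0 < μ {ω | X ω ≤ a}) :
    (μ ({ω | Y ω ∈ A} ∩ {ω | X ω ≤ a})).toReal / (μ {ω | X ω ≤ a}).toReal
      ≤ (μ ({ω | Y ω ∈ A} ∩ {ω | X ω ≤ b})).toReal / (μ {ω | X ω ≤ b}).toReal := by
  classical
  have hm : MeasurableSpace.comap X (inferInstance : MeasurableSpace ℝ)
      ≤ (inferInstance : MeasurableSpace Ω) := hX.comap_le
  set φ : ℝ → ℝ := A.indicator (fun _ => 1) with hφ_def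
  have hφmono : Monotone φ := by
    intro x y hxy
    by_cases hx : x ∈ A
    · simp [hφ_def, Set.indicator_of_mem hx, Set.indicator_of_mem (hA hxy hx)]
    · simp only [hφ_def, Set.indicator_of_notMem hx]
      exact Set.indicator_nonneg (fun _ _ => zero_le_one) y
  have hφbdd : ∃ M, ∀ t, |φ t| ≤ M := by
    refine ⟨1, fun t => ?_⟩
    by_cases ht : t ∈ A <;> simp [hφ_def, Set.indicator_apply, ht]
  obtain ⟨g, hg, hae⟩ := hPRD φ hφmono hφbdd
  set f : Ω → ℝ := fun ω => φ (Y ω) with hf_def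
  have hfeq : f = (Y ⁻¹' A).indicator (fun _ => (1:ℝ)) := by
    funext ω
    by_cases h : Y ω ∈ A <;> simp [hf_def, hφ_def, Set.indicator_apply, h]
  have hBmeas : MeasurableSet (Y ⁻¹' A) := hY hAmeas
  have hf_int : Integrable f μ := by
    rw [hfeq]; exact (integrable_const (1:ℝ)).indicator hBmeas
  have hgX_int : Integrable (fun ω => g (X ω)) μ :=
    (integrable_condExp (m := MeasurableSpace.comap X inferInstance)).congr hae
  set S : Set Ω := {ω | X ω ≤ a} with hS_def
  set T : Set Ω := {ω | X ω ≤ b} with hT_def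
  have hST : S ⊆ T := fun ω h => le_trans h hab
  have hSm : MeasurableSet[MeasurableSpace.comap X inferInstance] S :=
    ⟨Set.Iic a, measurableSet_Iic, rfl⟩
  have hTm : MeasurableSet[MeasurableSpace.comap X inferInstance] T :=
    ⟨Set.Iic b, measurableSet_Iic, rfl⟩
  have hSmeas : MeasurableSet S := hm S hSm
  have hTmeas : MeasurableSet T := hm T hTm
  have key : ∀ (s : Set Ω), MeasurableSet[MeasurableSpace.comap X inferInstance] s →
      MeasurableSet s →
      (μ ((Y ⁻¹' A) ∩ s)).toReal = ∫ ω in s, g (X ω) ∂μ := by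
    intro s hsm hs
    have h2 : ∫ ω in s, (μ[f|MeasurableSpace.comap X inferInstance]) ω ∂μ
        = ∫ ω in s, f ω ∂μ := setIntegral_condExp hm hf_int hsm
    have h3 : ∫ ω in s, (μ[f|MeasurableSpace.comap X inferInstance]) ω ∂μ
        = ∫ ω in s, g (X ω) ∂μ := by
      refine setIntegral_congr_ae hs ?_
      filter_upwards [hae] with ω hω _
      exact hω
    have h4 : ∫ ω in s, f ω ∂μ = (μ ((Y ⁻¹' A) ∩ s)).toReal := by
      rw [hfeq, setIntegral_indicator hBmeas, setIntegral_const, smul_eq_mul, mul_one,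
        Set.inter_comm]
      rfl
    rw [← h4, ← h2, h3]
  have hYA : {ω | Y ω ∈ A} = Y ⁻¹' A := rfl
  rw [hYA, key S hSm hSmeas, key T hTm hTmeas]
  have hμS_fin : μ S ≠ ⊤ := measure_ne_top μ S
  have hμD_fin : μ (T \ S) ≠ ⊤ := measure_ne_top μ _
  set pS : ℝ := (μ S).toReal with hpS_def
  set pD : ℝ := (μ (T \ S)).toReal with hpD_def
  have hpS_pos : 0 < pS := ENNReal.toReal_pos hPa.ne' hμS_fin
  have hpD_nonneg : 0 ≤ pD := ENNReal.toReal_nonneg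
  have hpT_eq : (μ T).toReal = pS + pD := by
    rw [hpS_def, hpD_def, ← ENNReal.toReal_add hμS_fin hμD_fin]
    congr 1
    rw [measure_diff hST hSmeas.nullMeasurableSet hμS_fin,
      add_tsub_cancel_of_le (measure_mono hST)]
  have hpT_pos : 0 < (μ T).toReal := by rw [hpT_eq]; linarith
  have hIT : ∫ ω in T, g (X ω) ∂μ
      = (∫ ω in S, g (X ω) ∂μ) + ∫ ω in T \ S, g (X ω) ∂μ := by
    rw [← setIntegral_union (Set.disjoint_sdiff_right) (hTmeas.diff hSmeas)
      hgX_int.integrableOn hgX_int.integrableOn, Set.union_diff_cancel hST]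
  set IS : ℝ := ∫ ω in S, g (X ω) ∂μ with hIS_def
  set ID : ℝ := ∫ ω in T \ S, g (X ω) ∂μ with hID_def
  have h1 : IS ≤ g a * pS := by
    have h := setIntegral_mono_on hgX_int.integrableOn
      (integrableOn_const) hSmeas
      (fun ω hω => hg (hω : X ω ≤ a))
    simpa [setIntegral_const, smul_eq_mul, mul_comm, Measure.real] using h
  have h2 : g a * pD ≤ ID := by
    have h := setIntegral_mono_on
      (integrableOn_const)
      hgX_int.integrableOn (hTmeas.diff hSmeas)
      (fun ω hω => hg (le_of_lt (lt_of_not_ge hω.2)))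
    simpa [setIntegral_const, smul_eq_mul, mul_comm, Measure.real] using h
  rw [div_le_div_iff₀ hpS_pos hpT_pos, hpT_eq, hIT]
  nlinarith [mul_le_mul_of_nonneg_right h1 hpD_nonneg,
    mul_le_mul_of_nonneg_left h2 hpS_pos.le]
end

section
/- Let X_1, ..., X_n be real random variables satisfying the PDS condition: E[φ(X_1, ..., X_n) | X_i = x] is nondecreasing in x for each i and every bounded coordinatewise nondecreasing φ. Let F_i be the (continuous) CDF of X_i, and let a_1 ≤ ... ≤ a_n be reals such that F_i(a_j)/j is nondecreasing in j = 1, ..., n for every i. Then P(X_{1:n} ≥ a_1, ..., X_{n:n} ≥ a_n) ≥ 1 − (1/n) Σ_{i=1}^n F_i(a_n). -/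
open MeasureTheory Finset

lemma ordStat_monotone_idx {n : ℕ} (x : Fin n → ℝ) : Monotone (ordStat x) :=
  Tuple.monotone_sort x

lemma card_filter_sort {n : ℕ} (x : Fin n → ℝ) (P : ℝ → Prop) [DecidablePred P] :
    (univ.filter fun j => P (ordStat x j)).card = (univ.filter fun i => P (x i)).card := by
  apply Finset.card_bij' (fun j _ => Tuple.sort x j) (fun i _ => (Tuple.sort x)⁻¹ i)
  · intro j hj; simp only [mem_filter, mem_univ, true_and] at *; simpa [ordStat] using hj
  · intro i hi; simp only [mem_filter, mem_univ, true_and] at *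
    simpa [ordStat] using hi
  · intro j hj; simp
  · intro i hi; simp

lemma mem_iff_lt_card_of_dc {n : ℕ} (S : Finset (Fin n))
    (hS : ∀ a b : Fin n, a ≤ b → b ∈ S → a ∈ S) (j : Fin n) :
    j ∈ S ↔ (j : ℕ) < S.card := by
  constructor
  · intro hj
    have h1 : Finset.Iic j ⊆ S := fun b hb => hS b j (Finset.mem_Iic.mp hb) hj
    have := Finset.card_le_card h1
    rwa [Fin.card_Iic] at this
  · intro hj
    by_contra hjS
    have h2 : S ⊆ Finset.Iio j := by
      intro b hb
      rw [Finset.mem_Iio]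
      by_contra hbj
      exact hjS (hS j b (le_of_not_gt hbj) hb)
    have := Finset.card_le_card h2
    rw [Fin.card_Iio] at this
    omega

lemma ordStat_le_iff {n : ℕ} (x : Fin n → ℝ) (j : Fin n) (t : ℝ) :
    ordStat x j ≤ t ↔ (j : ℕ) < (univ.filter fun i => x i ≤ t).card := by
  rw [← card_filter_sort x (fun r => r ≤ t)]
  rw [← mem_iff_lt_card_of_dc (univ.filter fun j' => ordStat x j' ≤ t)
    (fun a b hab hb => by
      simp only [mem_filter, mem_univ, true_and] at *
      exact le_trans (ordStat_monotone_idx x hab) hb) j]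
  simp

lemma ordStat_lt_iff {n : ℕ} (x : Fin n → ℝ) (j : Fin n) (t : ℝ) :
    ordStat x j < t ↔ (j : ℕ) < (univ.filter fun i => x i < t).card := by
  rw [← card_filter_sort x (fun r => r < t)]
  rw [← mem_iff_lt_card_of_dc (univ.filter fun j' => ordStat x j' < t)
    (fun a b hab hb => by
      simp only [mem_filter, mem_univ, true_and] at *
      exact lt_of_le_of_lt (ordStat_monotone_idx x hab) hb) j]
  simp

lemma ordStat_mono {n : ℕ} {x y : Fin n → ℝ} (hxy : x ≤ y) (j : Fin n) :
    ordStat x j ≤ ordStat y j := by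
  rw [ordStat_le_iff]
  have h := (ordStat_le_iff y j (ordStat y j)).mp le_rfl
  refine lt_of_lt_of_le h (Finset.card_le_card ?_)
  intro i hi
  simp only [mem_filter, mem_univ, true_and] at *
  exact le_trans (hxy i) hi

lemma key_step {Ω : Type*} [MeasurableSpace Ω] {μ : Measure Ω} [IsProbabilityMeasure μ]
    {Xi : Ω → ℝ} (hXi : Measurable Xi)
    {g : ℝ → ℝ} (hg : Monotone g) (hg0 : ∀ r, 0 ≤ g r) (hg1 : ∀ r, g r ≤ 1)
    {U : Set Ω}
    (hcond : ∀ s : ℝ, (μ ({ω | Xi ω ≤ s} ∩ U)).toReal = ∫ ω in {ω | Xi ω ≤ s}, g (Xi ω) ∂μ)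
    (s t : ℝ) (hst : s ≤ t) (k : ℕ) (hk : 1 ≤ k)
    (hp : (μ {ω | Xi ω ≤ s}).toReal ≤
      (k : ℝ) * ((μ {ω | Xi ω ≤ t}).toReal - (μ {ω | Xi ω ≤ s}).toReal)) :
    (μ ({ω | Xi ω ≤ s} ∩ U)).toReal / (k : ℝ) ≤ (μ ({ω | Xi ω ≤ t} ∩ U)).toReal / ((k : ℝ) + 1) := by
  set A : Set Ω := {ω | Xi ω ≤ s} with hA
  set B : Set Ω := {ω | Xi ω ≤ t} with hB
  have hAm : MeasurableSet A := hXi measurableSet_Iic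
  have hBm : MeasurableSet B := hXi measurableSet_Iic
  have hAB : A ⊆ B := fun ω hω => le_trans hω hst
  set C : Set Ω := B \ A with hC
  have hCm : MeasurableSet C := hBm.diff hAm
  have hdisj : Disjoint A C := disjoint_sdiff_self_right
  have hunion : A ∪ C = B := Set.union_diff_cancel hAB
  have hgint : Integrable (fun ω => g (Xi ω)) μ := by
    refine (integrable_const (1:ℝ)).mono' ((hg.measurable.comp hXi)).aestronglyMeasurable ?_
    filter_upwards with ω
    rw [Real.norm_eq_abs, abs_le]
    exact ⟨by linarith [hg0 (Xi ω)], hg1 _⟩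
  set I₁ : ℝ := ∫ ω in A, g (Xi ω) ∂μ with hI₁
  set I₂ : ℝ := ∫ ω in C, g (Xi ω) ∂μ with hI₂
  have hsplit : ∫ ω in B, g (Xi ω) ∂μ = I₁ + I₂ := by
    rw [← hunion]
    exact setIntegral_union hdisj hCm hgint.integrableOn hgint.integrableOn
  set p₁ : ℝ := (μ A).toReal with hp₁
  set p₂ : ℝ := (μ C).toReal with hp₂
  have hmeasC : p₂ = (μ B).toReal - p₁ := by
    rw [hp₂, hC, measure_diff hAB hAm.nullMeasurableSet (measure_ne_top μ A)]
    rw [ENNReal.toReal_sub_of_le (measure_mono hAB) (measure_ne_top μ B)]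
  have hI₁le : I₁ ≤ g s * p₁ := by
    have : I₁ ≤ ∫ _ω in A, g s ∂μ := by
      refine setIntegral_mono_on hgint.integrableOn ((integrableOn_const_iff (C := g s)).mpr ?_) hAm ?_
      · right; exact measure_lt_top μ A
      · intro ω hω; exact hg hω
    have h2 : (∫ _ω in A, g s ∂μ) = g s * p₁ := by
      simp [setIntegral_const, smul_eq_mul, hp₁, mul_comm, measureReal_def]
    linarith
  have hI₂ge : g s * p₂ ≤ I₂ := by
    have : (∫ _ω in C, g s ∂μ) ≤ I₂ := by
      refine setIntegral_mono_on ((integrableOn_const_iff (C := g s)).mpr ?_) hgint.integrableOn hCm ?_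
      · right; exact measure_lt_top μ C
      · intro ω hω
        have hω2 : ¬ Xi ω ≤ s := hω.2
        exact hg (le_of_not_ge hω2)
    have h2 : (∫ _ω in C, g s ∂μ) = g s * p₂ := by
      simp [setIntegral_const, smul_eq_mul, hp₂, mul_comm, measureReal_def]
    linarith
  have hgs0 : 0 ≤ g s := hg0 s
  have hkey : I₁ ≤ (k : ℝ) * I₂ := by
    have h1 : p₁ ≤ (k:ℝ) * p₂ := by rw [hmeasC]; linarith
    calc I₁ ≤ g s * p₁ := hI₁le
      _ ≤ g s * ((k:ℝ) * p₂) := by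
          exact mul_le_mul_of_nonneg_left h1 hgs0
      _ = (k:ℝ) * (g s * p₂) := by ring
      _ ≤ (k:ℝ) * I₂ := by
          exact mul_le_mul_of_nonneg_left hI₂ge (by positivity)
  have hI₂0 : 0 ≤ I₂ := by
    refine setIntegral_nonneg hCm fun ω _ => hg0 _
  rw [hcond s, hcond t, hsplit]
  rw [div_le_div_iff₀ (by exact_mod_cast hk) (by positivity)]
  nlinarith [hkey]

lemma cond_from_condexp {Ω : Type*} [mΩ : MeasurableSpace Ω] {μ : Measure Ω}
    [IsProbabilityMeasure μ]
    {Xi : Ω → ℝ} (hXi : Measurable Xi) {U : Set Ω} (hU : MeasurableSet U)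
    {g₀ : ℝ → ℝ} (hg₀ : Monotone g₀)
    (hce : μ[U.indicator (fun _ => (1:ℝ)) |
        MeasurableSpace.comap Xi (inferInstance : MeasurableSpace ℝ)] =ᵐ[μ] fun ω => g₀ (Xi ω)) :
    ∃ g : ℝ → ℝ, Monotone g ∧ (∀ r, 0 ≤ g r) ∧ (∀ r, g r ≤ 1) ∧
      ∀ s : ℝ, (μ ({ω | Xi ω ≤ s} ∩ U)).toReal = ∫ ω in {ω | Xi ω ≤ s}, g (Xi ω) ∂μ := by
  have hm : MeasurableSpace.comap Xi (inferInstance : MeasurableSpace ℝ) ≤ mΩ := hXi.comap_le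
  haveI : SigmaFinite (μ.trim hm) := by
    haveI : IsFiniteMeasure (μ.trim hm) := isFiniteMeasure_trim hm
    infer_instance
  set f : Ω → ℝ := U.indicator (fun _ => (1:ℝ)) with hf_def
  have hf : Integrable f μ := (integrable_const (1:ℝ)).indicator hU
  have h0 : 0 ≤ᵐ[μ] μ[f | MeasurableSpace.comap Xi inferInstance] := condExp_nonneg (by
    filter_upwards with ω
    exact Set.indicator_nonneg (fun _ _ => zero_le_one) ω)
  have h1 : μ[f | MeasurableSpace.comap Xi inferInstance]
      ≤ᵐ[μ] μ[(fun _ => (1:ℝ)) | MeasurableSpace.comap Xi inferInstance] :=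
    condExp_mono hf (integrable_const 1)
    (by filter_upwards with ω
        exact Set.indicator_le_self' (fun _ _ => zero_le_one) ω)
  rw [condExp_const hm] at h1
  set g : ℝ → ℝ := fun r => max 0 (min (g₀ r) 1) with hg_def
  have hg : Monotone g := fun r r' hrr' =>
    max_le_max le_rfl (min_le_min (hg₀ hrr') le_rfl)
  have hgae : (fun ω => g₀ (Xi ω)) =ᵐ[μ] fun ω => g (Xi ω) := by
    filter_upwards [hce, h0, h1] with ω hω h0ω h1ω
    have h0' : (0:ℝ) ≤ g₀ (Xi ω) := by rw [← hω]; exact h0ω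
    have h1' : g₀ (Xi ω) ≤ 1 := by rw [← hω]; exact h1ω
    simp only [hg_def]
    rw [min_eq_left h1', max_eq_right h0']
  have hce' : μ[f | MeasurableSpace.comap Xi inferInstance] =ᵐ[μ] fun ω => g (Xi ω) :=
    hce.trans hgae
  refine ⟨g, hg, fun r => le_max_left _ _, fun r => max_le (by linarith) (min_le_right _ _),
    fun s => ?_⟩
  have hAs : MeasurableSet[MeasurableSpace.comap Xi (inferInstance : MeasurableSpace ℝ)]
      {ω | Xi ω ≤ s} := ⟨Set.Iic s, measurableSet_Iic, rfl⟩
  have h2 := setIntegral_condExp hm hf hAs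
  rw [setIntegral_congr_ae (hm _ hAs) (hce'.mono fun ω hω _ => hω)] at h2
  rw [h2, hf_def, setIntegral_indicator hU, setIntegral_const, smul_eq_mul, mul_one, measureReal_def]

open scoped Classical in
lemma count_bound {Ω : Type*} [MeasurableSpace Ω] {μ : Measure Ω} [IsFiniteMeasure μ]
    {N : ℕ} (A : Fin N → Set Ω) (hA : ∀ i, MeasurableSet (A i)) {E : Set Ω}
    (hE : MeasurableSet E) (m : ℕ)
    (hcount : ∀ ω ∈ E, m ≤ (univ.filter fun i => ω ∈ A i).card) :
    (m : ℝ) * (μ E).toReal ≤ ∑ i, (μ (A i ∩ E)).toReal := by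
  have hInd : ∀ (S : Set Ω), MeasurableSet S → Integrable (S.indicator fun _ => (1:ℝ)) μ :=
    fun S hS => (integrable_const 1).indicator hS
  have h1 : (m : ℝ) * (μ E).toReal
      = ∫ ω, (m : ℝ) * E.indicator (fun _ => (1:ℝ)) ω ∂μ := by
    rw [integral_const_mul, integral_indicator_const (1:ℝ) hE, smul_eq_mul, mul_one, measureReal_def]
  have h2 : ∑ i, (μ (A i ∩ E)).toReal
      = ∫ ω, ∑ i, (A i ∩ E).indicator (fun _ => (1:ℝ)) ω ∂μ := by
    rw [integral_finset_sum _ (fun i _ => hInd _ ((hA i).inter hE))]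
    congr 1
    ext i
    rw [integral_indicator_const (1:ℝ) ((hA i).inter hE), smul_eq_mul, mul_one, measureReal_def]
  rw [h1, h2]
  refine integral_mono ((hInd E hE).const_mul _)
    (integrable_finset_sum _ (fun i _ => hInd _ ((hA i).inter hE))) ?_
  intro ω
  dsimp only
  by_cases hω : ω ∈ E
  · have : ∑ i, (A i ∩ E).indicator (fun _ => (1:ℝ)) ω
        = ((univ.filter fun i => ω ∈ A i).card : ℝ) := by
      rw [Finset.card_filter]
      push_cast
      refine Finset.sum_congr rfl fun i _ => ?_
      by_cases h : ω ∈ A i <;> simp [Set.indicator_apply, h, hω]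
    rw [this]
    simp only [Set.indicator_of_mem hω, mul_one]
    exact_mod_cast hcount ω hω
  · simp only [Set.indicator_of_notMem hω, mul_zero]
    refine Finset.sum_nonneg fun i _ => Set.indicator_nonneg (fun _ _ => zero_le_one) ω
/-- The Simes inequality (1.2) under the PDS condition: if for each `i` and every
bounded coordinatewise nondecreasing `φ` the conditional expectation
`E[φ(X_1, ..., X_n) | X_i]` is a nondecreasing function of `X_i`, the marginal CDFs
`F_i` are continuous, and `a_1 ≤ ⋯ ≤ a_n` are such that `F_i(a_j)/j` is nondecreasing
in `j` for each `i`, then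
`P(X_{1:n} ≥ a_1, ..., X_{n:n} ≥ a_n) ≥ 1 − (1/n) Σ_i F_i(a_n)`. -/
theorem simes_inequality_PDS
    {Ω : Type*} [MeasurableSpace Ω] {μ : Measure Ω} [IsProbabilityMeasure μ]
    {n : ℕ} (hn : 0 < n) (X : Fin n → Ω → ℝ) (hmeas : ∀ i, Measurable (X i))
    (hPDS : ∀ (i : Fin n) (φ : (Fin n → ℝ) → ℝ), Monotone φ →
      (∃ M, ∀ x, |φ x| ≤ M) →
      ∃ g : ℝ → ℝ, Monotone g ∧
        μ[(fun ω => φ (fun j => X j ω)) |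
            MeasurableSpace.comap (X i) (inferInstance : MeasurableSpace ℝ)]
          =ᵐ[μ] fun ω => g (X i ω))
    (F : Fin n → ℝ → ℝ)
    (hcdf : ∀ i (t : ℝ), (μ {ω | X i ω ≤ t}).toReal = F i t)
    (hcont : ∀ i, Continuous (F i))
    (a : Fin n → ℝ) (ha : Monotone a)
    (hratio : ∀ (i : Fin n) (j j' : Fin n), j ≤ j' →
      F i (a j) / ((j : ℕ) + 1) ≤ F i (a j') / ((j' : ℕ) + 1)) :
    1 - (1 / (n : ℝ)) * ∑ i, F i (a ⟨n - 1, by omega⟩)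
      ≤ (μ {ω | ∀ i : Fin n, a i ≤ ordStat (fun j => X j ω) i}).toReal := by
  classical
  have hn1 : (1:ℝ) ≤ (n:ℝ) := by exact_mod_cast hn
  have hmin : ∀ k : ℕ, min k (n-1) < n := fun k => by omega
  set aN : ℕ → ℝ := fun k => a ⟨min k (n-1), hmin k⟩ with haN
  have haNk : ∀ (k : ℕ) (hk : k < n), aN k = a ⟨k, hk⟩ := by
    intro k hk
    simp only [haN]
    exact congrArg a (Fin.ext (by simp; omega))
  have haNmono : Monotone aN := fun k k' hkk' => ha (by simp [Fin.mk_le_mk]; omega)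
  -- violation sets
  have hXmeas : ∀ (i : Fin n) (s : ℝ), MeasurableSet {ω | X i ω ≤ s} :=
    fun i s => hmeas i measurableSet_Iic
  set V : Fin n → Set Ω := fun j => {ω | ordStat (fun i => X i ω) j < a j} with hVdef
  have hVmeas : ∀ j, MeasurableSet (V j) := by
    intro j
    have hmf : Measurable fun ω => ∑ i : Fin n, (if X i ω < a j then 1 else 0 : ℕ) :=
      Finset.measurable_sum _ (fun i _ =>
        Measurable.ite (measurableSet_lt (hmeas i) measurable_const)
          measurable_const measurable_const)
    have heq : V j = (fun ω => ∑ i : Fin n, (if X i ω < a j then 1 else 0 : ℕ)) ⁻¹'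
        (Set.Ioi (j:ℕ)) := by
      ext ω
      simp only [hVdef, Set.mem_setOf_eq, ordStat_lt_iff, Set.mem_preimage, Set.mem_Ioi,
        Finset.card_filter]
    rw [heq]
    exact hmf measurableSet_Ioi
  set D : ℕ → Set Ω := fun k => ⋃ (j : Fin n), ⋃ (_ : k ≤ (j:ℕ)), V j with hDdef
  have hmemD : ∀ k ω, ω ∈ D k ↔ ∃ j : Fin n, k ≤ (j:ℕ) ∧ ω ∈ V j := by
    intro k ω; simp [hDdef]
  have hDmeas : ∀ k, MeasurableSet (D k) :=
    fun k => MeasurableSet.iUnion fun j => MeasurableSet.iUnion fun _ => hVmeas j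
  have hDn : D n = ∅ := by
    ext ω
    simp only [hmemD, Set.mem_empty_iff_false, iff_false, not_exists]
    intro j ⟨h1, _⟩
    have := j.isLt
    omega
  have hDanti : ∀ k, D (k+1) ⊆ D k := by
    intro k ω hω
    rw [hmemD] at *
    obtain ⟨j, h1, h2⟩ := hω
    exact ⟨j, by omega, h2⟩
  set P : Set Ω → ℝ := fun A => (μ A).toReal with hPdef
  have hPmono : ∀ {A B : Set Ω}, A ⊆ B → P A ≤ P B :=
    fun h => ENNReal.toReal_mono (measure_ne_top μ _) (measure_mono h)
  have hPdiff : ∀ (A B : Set Ω), MeasurableSet B → B ⊆ A → P (A \ B) = P A - P B := by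
    intro A B hB hBA
    rw [hPdef]
    simp only
    rw [measure_diff hBA hB.nullMeasurableSet (measure_ne_top μ B),
      ENNReal.toReal_sub_of_le (measure_mono hBA) (measure_ne_top μ A)]
  have hPsub : ∀ (A B : Set Ω), MeasurableSet B → P (A ∩ B) + P (A \ B) = P A := by
    intro A B hB
    rw [hPdef]
    simp only
    rw [← ENNReal.toReal_add (measure_ne_top μ _) (measure_ne_top μ _),
      measure_inter_add_diff A hB]
  set E : ℕ → Set Ω := fun k => D k \ D (k+1) with hEdef
  have hEmeas : ∀ k, MeasurableSet (E k) := fun k => (hDmeas k).diff (hDmeas (k+1))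
  have hPE : ∀ k, P (E k) = P (D k) - P (D (k+1)) :=
    fun k => hPdiff (D k) (D (k+1)) (hDmeas (k+1)) (hDanti k)
  have hsumE : ∑ k ∈ Finset.range n, P (E k) = P (D 0) := by
    have h := Finset.sum_range_sub' (fun k => P (D k)) n
    calc ∑ k ∈ Finset.range n, P (E k) = ∑ k ∈ Finset.range n, (P (D k) - P (D (k+1))) :=
          Finset.sum_congr rfl fun k _ => hPE k
      _ = P (D 0) - P (D n) := h
      _ = P (D 0) := by rw [hDn]; simp [hPdef]
  -- the good event is the complement of D 0
  have hgood : {ω | ∀ i : Fin n, a i ≤ ordStat (fun j => X j ω) i} = (D 0)ᶜ := by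
    ext ω
    simp only [Set.mem_setOf_eq, Set.mem_compl_iff, hmemD, hVdef, Set.mem_setOf_eq,
      not_exists]
    constructor
    · intro h j
      intro ⟨_, hj⟩
      exact absurd hj (not_lt.mpr (h j))
    · intro h j
      by_contra hc
      exact h j ⟨Nat.zero_le _, not_le.mp hc⟩
  -- counting bound
  have hcnt : ∀ k, k < n → ((k:ℝ)+1) * P (E k) ≤ ∑ i, P ({ω | X i ω ≤ aN k} ∩ E k) := by
    intro k hk
    have hc := count_bound (μ := μ) (fun i : Fin n => {ω | X i ω ≤ aN k})
      (fun i => hXmeas i _) (hEmeas k) (k+1) ?_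
    · push_cast at hc
      exact hc
    · intro ω hω
      obtain ⟨hω1, hω2⟩ := hω
      rw [hmemD] at hω1
      obtain ⟨j, hkj, hVj⟩ := hω1
      have hjk : (j:ℕ) = k := by
        by_contra hne
        exact hω2 ((hmemD (k+1) ω).mpr ⟨j, by omega, hVj⟩)
      have haj : a j = aN k := by
        rw [haNk k hk]
        exact congrArg a (Fin.ext hjk)
      rw [hVdef] at hVj
      have hcard := (ordStat_lt_iff (fun i => X i ω) j (a j)).mp hVj
      rw [hjk] at hcard
      refine le_trans hcard (Finset.card_le_card ?_)
      intro i hi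
      simp only [Finset.mem_filter, Finset.mem_univ, true_and, Set.mem_setOf_eq] at *
      rw [← haj]
      exact le_of_lt hi
  -- per-coordinate bound
  have hperi : ∀ i : Fin n,
      ∑ k ∈ Finset.range n, P ({ω | X i ω ≤ aN k} ∩ E k) / ((k:ℝ)+1)
        ≤ F i (aN (n-1)) / (n:ℝ) := by
    intro i
    -- the conditional-expectation data for each level k
    have hU : ∀ k : ℕ, ∃ g : ℝ → ℝ, Monotone g ∧ (∀ r, 0 ≤ g r) ∧ (∀ r, g r ≤ 1) ∧
        ∀ s : ℝ, P ({ω | X i ω ≤ s} ∩ (D k)ᶜ) = ∫ ω in {ω | X i ω ≤ s}, g (X i ω) ∂μ := by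
      intro k
      set φ : (Fin n → ℝ) → ℝ :=
        fun x => if ∃ j : Fin n, k ≤ (j:ℕ) ∧ ordStat x j < a j then 0 else 1 with hφdef
      have hφmono : Monotone φ := by
        intro x y hxy
        by_cases hy : ∃ j : Fin n, k ≤ (j:ℕ) ∧ ordStat y j < a j
        · have hx : ∃ j : Fin n, k ≤ (j:ℕ) ∧ ordStat x j < a j := by
            obtain ⟨j, hj1, hj2⟩ := hy
            exact ⟨j, hj1, lt_of_le_of_lt (ordStat_mono hxy j) hj2⟩
          simp [hφdef, hx, hy]
        · have : φ y = 1 := by simp [hφdef, hy]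
          rw [this]
          by_cases hx : ∃ j : Fin n, k ≤ (j:ℕ) ∧ ordStat x j < a j <;>
            simp [hφdef, hx]
      have hφbdd : ∃ M, ∀ x, |φ x| ≤ M := by
        refine ⟨1, fun x => ?_⟩
        by_cases h : ∃ j : Fin n, k ≤ (j:ℕ) ∧ ordStat x j < a j <;> simp [hφdef, h]
      obtain ⟨g₀, hg₀, hce⟩ := hPDS i φ hφmono hφbdd
      have hfun : (fun ω => φ (fun j => X j ω)) = ((D k)ᶜ).indicator (fun _ => (1:ℝ)) := by
        funext ω
        by_cases hω : ω ∈ D k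
        · have hmem : ∃ j : Fin n, k ≤ (j:ℕ) ∧ ordStat (fun j => X j ω) j < a j := by
            obtain ⟨j, h1, h2⟩ := (hmemD k ω).mp hω
            exact ⟨j, h1, h2⟩
          simp [hφdef, hmem, Set.indicator_of_notMem (by simpa using hω : ω ∉ (D k)ᶜ)]
        · have hmem : ¬ ∃ j : Fin n, k ≤ (j:ℕ) ∧ ordStat (fun j => X j ω) j < a j := by
            intro ⟨j, h1, h2⟩
            exact hω ((hmemD k ω).mpr ⟨j, h1, h2⟩)
          simp [hφdef, hmem, Set.indicator_of_mem (by simpa using hω : ω ∈ (D k)ᶜ)]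
      rw [hfun] at hce
      exact cond_from_condexp (hmeas i) (hDmeas k).compl hg₀ hce
    set q : ℕ → ℝ := fun k => P ({ω | X i ω ≤ aN k} ∩ D k) with hq
    set u : ℕ → ℝ := fun k => P ({ω | X i ω ≤ aN k} ∩ D (k+1)) with hu
    set c : ℕ → ℝ := fun k => F i (aN k) / ((k:ℝ)+1) with hc
    have hterm : ∀ k, P ({ω | X i ω ≤ aN k} ∩ E k) = q k - u k := by
      intro k
      have hset : {ω | X i ω ≤ aN k} ∩ E k
          = ({ω | X i ω ≤ aN k} ∩ D k) \ ({ω | X i ω ≤ aN k} ∩ D (k+1)) := by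
        rw [hEdef]
        simp only
        rw [Set.inter_diff_distrib_left]
      rw [hset, hPdiff _ _ ((hXmeas i _).inter (hDmeas (k+1)))
        (Set.inter_subset_inter_right _ (hDanti k))]
    -- decomposition over complement
    have hcompl : ∀ (k : ℕ) (s : ℝ),
        P ({ω | X i ω ≤ s} ∩ D k) = F i s - P ({ω | X i ω ≤ s} ∩ (D k)ᶜ) := by
      intro k s
      have h := hPsub {ω | X i ω ≤ s} (D k) (hDmeas k)
      have hFs : P {ω | X i ω ≤ s} = F i s := hcdf i s
      rw [Set.diff_eq] at h
      linarith
    -- the key step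
    have hstep : ∀ k, 1 ≤ k → k < n →
        q k / ((k:ℝ)+1) - u (k-1) / (k:ℝ) ≤ c k - c (k-1) := by
      intro k hk1 hkn
      obtain ⟨g, hg, hg0, hg1, hcond⟩ := hU k
      have hs : aN (k-1) ≤ aN k := haNmono (by omega)
      have hcast : ((k-1:ℕ):ℝ) + 1 = (k:ℝ) := by
        rw [Nat.cast_sub hk1]
        push_cast
        ring
      have hratio' : F i (aN (k-1)) / (k:ℝ) ≤ F i (aN k) / ((k:ℝ)+1) := by
        have h := hratio i ⟨k-1, by omega⟩ ⟨k, hkn⟩ (by simp only [Fin.mk_le_mk]; omega)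
        have h2 : F i (a ⟨k-1, by omega⟩) / (((k-1:ℕ):ℝ) + 1)
            ≤ F i (a ⟨k, hkn⟩) / (((k:ℕ):ℝ) + 1) := h
        rw [hcast] at h2
        rw [haNk (k-1) (by omega), haNk k hkn]
        exact h2
      have hp : (μ {ω | X i ω ≤ aN (k-1)}).toReal ≤
          (k:ℝ) * ((μ {ω | X i ω ≤ aN k}).toReal - (μ {ω | X i ω ≤ aN (k-1)}).toReal) := by
        rw [hcdf, hcdf]
        have hkpos : (1:ℝ) ≤ (k:ℝ) := by exact_mod_cast hk1
        rw [div_le_div_iff₀ (by linarith) (by linarith)] at hratio'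
        nlinarith
      have hks := key_step (hmeas i) hg hg0 hg1 hcond (aN (k-1)) (aN k) hs k hk1 hp
      have e1 := hcompl k (aN k)
      have e2 := hcompl k (aN (k-1))
      have hu' : u (k-1) = P ({ω | X i ω ≤ aN (k-1)} ∩ D k) := by
        rw [hu]
        simp only
        rw [show k - 1 + 1 = k by omega]
      rw [hq]
      simp only
      rw [e1, hu', e2, hc]
      simp only
      rw [sub_div, sub_div]
      have hresc : P ({ω | X i ω ≤ aN (k-1)} ∩ (D k)ᶜ) / (k:ℝ)
          ≤ P ({ω | X i ω ≤ aN k} ∩ (D k)ᶜ) / ((k:ℝ)+1) := hks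
      rw [hcast]
      linarith
    have hq0 : q 0 ≤ c 0 := by
      rw [hq, hc]
      simp only [Nat.cast_zero, zero_add, div_one]
      rw [← hcdf i (aN 0)]
      exact hPmono Set.inter_subset_left
    have hun : u (n-1) = 0 := by
      rw [hu]
      simp only
      rw [show n - 1 + 1 = n by omega, hDn]
      simp [hPdef]
    have hind : ∀ m, 1 ≤ m → m ≤ n →
        ∑ k ∈ Finset.range m, (q k - u k) / ((k:ℝ)+1) ≤ c (m-1) - u (m-1) / (m:ℝ) := by
      intro m hm1
      induction m, hm1 using Nat.le_induction with
      | base =>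
        intro _
        simp only [Finset.sum_range_one, Nat.cast_zero, zero_add, div_one, Nat.cast_one]
        linarith
      | succ m hm IH =>
        intro hmn
        rw [Finset.sum_range_succ]
        have h1 := IH (by omega)
        have h2 := hstep m (by omega) (by omega)
        have h3 : u (m - 1) = u (m-1) := rfl
        have hm1' : m - 1 + 1 = m := by omega
        have hcast : ((m+1:ℕ):ℝ) = (m:ℝ) + 1 := by push_cast; ring
        have hsimp : (m + 1 : ℕ) - 1 = m := by omega
        rw [hsimp]
        push_cast
        rw [sub_div]
        linarith
    have hfin := hind n (by omega) le_rfl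
    rw [hun] at hfin
    have hsum_eq : ∑ k ∈ Finset.range n, P ({ω | X i ω ≤ aN k} ∩ E k) / ((k:ℝ)+1)
        = ∑ k ∈ Finset.range n, (q k - u k) / ((k:ℝ)+1) :=
      Finset.sum_congr rfl fun k _ => by rw [hterm k]
    rw [hsum_eq]
    have hcn : c (n-1) = F i (aN (n-1)) / (n:ℝ) := by
      rw [hc]
      simp only
      congr 1
      push_cast [Nat.cast_sub hn]
      ring
    rw [← hcn]
    simpa using hfin
  -- assembly
  have hD0 : P (D 0) ≤ (1/(n:ℝ)) * ∑ i, F i (aN (n-1)) := by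
    have h1 : P (D 0) ≤ ∑ k ∈ Finset.range n,
        (∑ i, P ({ω | X i ω ≤ aN k} ∩ E k)) / ((k:ℝ)+1) := by
      rw [← hsumE]
      refine Finset.sum_le_sum fun k hk => ?_
      have hkpos : (0:ℝ) < (k:ℝ)+1 := by positivity
      rw [le_div_iff₀ hkpos]
      have := hcnt k (Finset.mem_range.mp hk)
      linarith
    have h2 : ∑ k ∈ Finset.range n, (∑ i, P ({ω | X i ω ≤ aN k} ∩ E k)) / ((k:ℝ)+1)
        = ∑ i, ∑ k ∈ Finset.range n, P ({ω | X i ω ≤ aN k} ∩ E k) / ((k:ℝ)+1) := by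
      rw [Finset.sum_comm]
      exact Finset.sum_congr rfl fun k _ => by rw [Finset.sum_div]
    have h3 : ∑ i : Fin n, F i (aN (n-1)) / (n:ℝ) = (1/(n:ℝ)) * ∑ i, F i (aN (n-1)) := by
      rw [← Finset.sum_div]
      ring
    calc P (D 0) ≤ _ := h1
      _ = _ := h2
      _ ≤ ∑ i : Fin n, F i (aN (n-1)) / (n:ℝ) := Finset.sum_le_sum fun i _ => hperi i
      _ = _ := h3
  rw [hgood]
  have hcompl0 : P ((D 0)ᶜ) = 1 - P (D 0) := by
    rw [hPdef]
    simp only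
    rw [measure_compl (hDmeas 0) (measure_ne_top μ _), measure_univ,
      ENNReal.toReal_sub_of_le prob_le_one ENNReal.one_ne_top, ENNReal.toReal_one]
  have hafin : a ⟨n-1, by omega⟩ = aN (n-1) := by
    rw [haNk (n-1) (by omega)]
  show 1 - (1 / (n : ℝ)) * ∑ i, F i (a ⟨n - 1, by omega⟩) ≤ P ((D 0)ᶜ)
  rw [hcompl0]
  have : ∑ i : Fin n, F i (a ⟨n-1, by omega⟩) = ∑ i, F i (aN (n-1)) :=
    Finset.sum_congr rfl fun i _ => by rw [hafin]
  rw [this]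
  linarith
end
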